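/- arXiv:2005.08666 — 4 statements merged into one kernel-verified Lean document; each statement's English description precedes it below -/
import Mathlib

section
/- Let h solve the height system with Bernoulli constant r. Then the flow force F(q) = ∫₀¹ ( (1 − h_q(q,p)²)/(2 h_p(q,p)²) − h(q,p) − Ω(p) + Ω(1) + r ) h_p(q,p) dp is independent of q, i.e. F'(q) = 0 for all q ∈ ℝ. -/
open MeasureTheory Set Filter

noncomputable section

/-- `Omeg ω p = ∫₀^p ω(t) dt`, the primitive of the vorticity function. -/
def Omeg (ω : ℝ → ℝ) (p : ℝ) : ℝ := ∫ t in (0:ℝ)..p, ω t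

/-- `s0 ω = sqrt (max_{p ∈ [0,1]} 2 Ω(p))`. -/
def s0 (ω : ℝ → ℝ) : ℝ := Real.sqrt (sSup ((fun p => 2 * Omeg ω p) '' Icc (0:ℝ) 1))

/-- `Hp ω p s = (s² − 2Ω(p))^{-1/2}`. -/
def Hp (ω : ℝ → ℝ) (p s : ℝ) : ℝ := (Real.sqrt (s ^ 2 - 2 * Omeg ω p))⁻¹

/-- `Hfun ω p s = H(p; s) = ∫₀^p (s² − 2Ω(τ))^{-1/2} dτ`. -/
def Hfun (ω : ℝ → ℝ) (p s : ℝ) : ℝ := ∫ τ in (0:ℝ)..p, Hp ω τ s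

/-- `dd ω s = d(s) = H(1; s)`. -/
def dd (ω : ℝ → ℝ) (s : ℝ) : ℝ := Hfun ω 1 s

/-- `RR ω s = R(s) = s²/2 − Ω(1) + d(s)`, the Bernoulli constant of the stream solution. -/
def RR (ω : ℝ → ℝ) (s : ℝ) : ℝ := s ^ 2 / 2 - Omeg ω 1 + dd ω s

/-- `sigmaFun ω s r = σ(s; r)`. -/
def sigmaFun (ω : ℝ → ℝ) (s r : ℝ) : ℝ :=
  ∫ p in (0:ℝ)..1,
    (1 / (2 * (Hp ω p s) ^ 2) - Hfun ω p s - Omeg ω p + Omeg ω 1 + r) * Hp ω p s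

/-- Partial derivative in the first (horizontal) variable `q`. -/
def dq (f : ℝ → ℝ → ℝ) (q p : ℝ) : ℝ := deriv (fun x => f x p) q

/-- Partial derivative in the second (vertical) variable `p`. -/
def dp (f : ℝ → ℝ → ℝ) (q p : ℝ) : ℝ := deriv (fun y => f q y) p

/-- The height system with Bernoulli constant `r` on the strip `S = ℝ × [0,1]`. -/
structure HeightSol (ω : ℝ → ℝ) (r : ℝ) (h : ℝ → ℝ → ℝ) : Prop where
  smooth : ContDiff ℝ 2 (Function.uncurry h)
  hp_pos : ∀ q : ℝ, ∀ p ∈ Icc (0:ℝ) 1, 0 < dp h q p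
  pde : ∀ q : ℝ, ∀ p ∈ Icc (0:ℝ) 1,
    (1 + (dq h q p) ^ 2) / (dp h q p) ^ 2 * dp (dp h) q p
      - 2 * (dq h q p) / (dp h q p) * dp (dq h) q p
      + dq (dq h) q p - ω p * dp h q p = 0
  top : ∀ q : ℝ, (1 + (dq h q 1) ^ 2) / (2 * (dp h q 1) ^ 2) + h q 1 = r
  bot : ∀ q : ℝ, h q 0 = 0

/-- The flow force of a height function `h`, computed on the vertical line through `q`. -/
def flowForce (ω : ℝ → ℝ) (r : ℝ) (h : ℝ → ℝ → ℝ) (q : ℝ) : ℝ :=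
  ∫ p in (0:ℝ)..1,
    ((1 - (dq h q p) ^ 2) / (2 * (dp h q p) ^ 2) - h q p - Omeg ω p + Omeg ω 1 + r) * dp h q p

/-- `wfun ω s h = w^{(s)} = h − H(·; s)`. -/
def wfun (ω : ℝ → ℝ) (s : ℝ) (h : ℝ → ℝ → ℝ) (q p : ℝ) : ℝ := h q p - Hfun ω p s

/-- The flow force flux function `Φ^{(s)}`. -/
def Phi (ω : ℝ → ℝ) (s : ℝ) (h : ℝ → ℝ → ℝ) (q p : ℝ) : ℝ :=
  ∫ p' in (0:ℝ)..p,
    ((dp (wfun ω s h) q p') ^ 2 / (dp h q p' * (Hp ω p' s) ^ 2)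
      - (dq (wfun ω s h) q p') ^ 2 / dp h q p')

/-- `h ∈ C^{2,γ}(S̄)`: `h` is twice continuously differentiable, all partial derivatives of
order ≤ 2 are bounded on the strip, and the second-order derivatives are uniformly
γ-Hölder continuous on the strip. -/
def C2Holder (γ : ℝ) (h : ℝ → ℝ → ℝ) : Prop :=
  ContDiff ℝ 2 (Function.uncurry h) ∧
  (∀ g ∈ ([h, dq h, dp h, dq (dq h), dp (dq h), dp (dp h)] : List (ℝ → ℝ → ℝ)),
    ∃ M : ℝ, ∀ q : ℝ, ∀ p ∈ Icc (0:ℝ) 1, |g q p| ≤ M) ∧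
  (∀ g ∈ ([dq (dq h), dp (dq h), dp (dp h)] : List (ℝ → ℝ → ℝ)),
    ∃ C : ℝ, ∀ q q' : ℝ, ∀ p ∈ Icc (0:ℝ) 1, ∀ p' ∈ Icc (0:ℝ) 1,
      |g q p - g q' p'| ≤ C * Real.sqrt ((q - q') ^ 2 + (p - p') ^ 2) ^ γ)

end


noncomputable section
namespace FF
open MeasureTheory Set Filter
variable {h : ℝ → ℝ → ℝ}

lemma hasDerivAt_q (hf : ContDiff ℝ 2 (Function.uncurry h)) (q p : ℝ) :
    HasDerivAt (fun x => h x p) (fderiv ℝ (Function.uncurry h) (q, p) (1, 0)) q := by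
  have hd : HasFDerivAt (Function.uncurry h) (fderiv ℝ (Function.uncurry h) (q, p)) (q, p) :=
    ((hf.differentiable (by norm_num)) (q, p)).hasFDerivAt
  have hline : HasDerivAt (fun x : ℝ => (x, p)) ((1 : ℝ), (0 : ℝ)) q :=
    (hasDerivAt_id q).prodMk (hasDerivAt_const q p)
  exact (hd.comp_hasDerivAt q hline)

lemma hasDerivAt_p (hf : ContDiff ℝ 2 (Function.uncurry h)) (q p : ℝ) :
    HasDerivAt (fun y => h q y) (fderiv ℝ (Function.uncurry h) (q, p) (0, 1)) p := by
  have hd : HasFDerivAt (Function.uncurry h) (fderiv ℝ (Function.uncurry h) (q, p)) (q, p) :=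
    ((hf.differentiable (by norm_num)) (q, p)).hasFDerivAt
  have hline : HasDerivAt (fun y : ℝ => (q, y)) ((0 : ℝ), (1 : ℝ)) p :=
    (hasDerivAt_const p q).prodMk (hasDerivAt_id p)
  exact (hd.comp_hasDerivAt p hline)

lemma dq_eq (hf : ContDiff ℝ 2 (Function.uncurry h)) (q p : ℝ) :
    dq h q p = fderiv ℝ (Function.uncurry h) (q, p) (1, 0) := (hasDerivAt_q hf q p).deriv

lemma dp_eq (hf : ContDiff ℝ 2 (Function.uncurry h)) (q p : ℝ) :
    dp h q p = fderiv ℝ (Function.uncurry h) (q, p) (0, 1) := (hasDerivAt_p hf q p).deriv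

lemma contDiff_A (hf : ContDiff ℝ 2 (Function.uncurry h)) :
    ContDiff ℝ 1 (fderiv ℝ (Function.uncurry h)) :=
  hf.fderiv_right (by norm_num)

lemma hasDerivAt_A_q (hf : ContDiff ℝ 2 (Function.uncurry h)) (q p : ℝ) (v : ℝ × ℝ) :
    HasDerivAt (fun x => fderiv ℝ (Function.uncurry h) (x, p) v)
      (fderiv ℝ (fderiv ℝ (Function.uncurry h)) (q, p) (1, 0) v) q := by
  have hA : HasFDerivAt (fderiv ℝ (Function.uncurry h))
      (fderiv ℝ (fderiv ℝ (Function.uncurry h)) (q, p)) (q, p) :=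
    (((contDiff_A hf).differentiable one_ne_zero) (q, p)).hasFDerivAt
  have hev := (ContinuousLinearMap.apply ℝ ℝ v).hasFDerivAt.comp (q, p) hA
  have hline : HasDerivAt (fun x : ℝ => (x, p)) ((1 : ℝ), (0 : ℝ)) q :=
    (hasDerivAt_id q).prodMk (hasDerivAt_const q p)
  exact hev.comp_hasDerivAt q hline

lemma hasDerivAt_A_p (hf : ContDiff ℝ 2 (Function.uncurry h)) (q p : ℝ) (v : ℝ × ℝ) :
    HasDerivAt (fun y => fderiv ℝ (Function.uncurry h) (q, y) v)
      (fderiv ℝ (fderiv ℝ (Function.uncurry h)) (q, p) (0, 1) v) p := by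
  have hA : HasFDerivAt (fderiv ℝ (Function.uncurry h))
      (fderiv ℝ (fderiv ℝ (Function.uncurry h)) (q, p)) (q, p) :=
    (((contDiff_A hf).differentiable one_ne_zero) (q, p)).hasFDerivAt
  have hev := (ContinuousLinearMap.apply ℝ ℝ v).hasFDerivAt.comp (q, p) hA
  have hline : HasDerivAt (fun y : ℝ => (q, y)) ((0 : ℝ), (1 : ℝ)) p :=
    (hasDerivAt_const p q).prodMk (hasDerivAt_id p)
  exact hev.comp_hasDerivAt p hline

lemma hasDerivAt_dq_q (hf : ContDiff ℝ 2 (Function.uncurry h)) (q p : ℝ) :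
    HasDerivAt (fun x => dq h x p) (dq (dq h) q p) q := by
  have h1 : (fun x => dq h x p) = fun x => fderiv ℝ (Function.uncurry h) (x, p) (1, 0) := by
    funext x; exact dq_eq hf x p
  have := hasDerivAt_A_q hf q p (1, 0)
  rw [← h1] at this
  exact this.differentiableAt.hasDerivAt

lemma hasDerivAt_dq_p (hf : ContDiff ℝ 2 (Function.uncurry h)) (q p : ℝ) :
    HasDerivAt (fun y => dq h q y) (dp (dq h) q p) p := by
  have h1 : (fun y => dq h q y) = fun y => fderiv ℝ (Function.uncurry h) (q, y) (1, 0) := by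
    funext y; exact dq_eq hf q y
  have := hasDerivAt_A_p hf q p (1, 0)
  rw [← h1] at this
  exact this.differentiableAt.hasDerivAt

lemma hasDerivAt_dp_q (hf : ContDiff ℝ 2 (Function.uncurry h)) (q p : ℝ) :
    HasDerivAt (fun x => dp h x p) (dq (dp h) q p) q := by
  have h1 : (fun x => dp h x p) = fun x => fderiv ℝ (Function.uncurry h) (x, p) (0, 1) := by
    funext x; exact dp_eq hf x p
  have := hasDerivAt_A_q hf q p (0, 1)
  rw [← h1] at this
  exact this.differentiableAt.hasDerivAt

lemma hasDerivAt_dp_p (hf : ContDiff ℝ 2 (Function.uncurry h)) (q p : ℝ) :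
    HasDerivAt (fun y => dp h q y) (dp (dp h) q p) p := by
  have h1 : (fun y => dp h q y) = fun y => fderiv ℝ (Function.uncurry h) (q, y) (0, 1) := by
    funext y; exact dp_eq hf q y
  have := hasDerivAt_A_p hf q p (0, 1)
  rw [← h1] at this
  exact this.differentiableAt.hasDerivAt

lemma schwarz (hf : ContDiff ℝ 2 (Function.uncurry h)) (q p : ℝ) :
    dp (dq h) q p = dq (dp h) q p := by
  have h1 := hasDerivAt_A_p hf q p (1, 0)
  have h2 := hasDerivAt_A_q hf q p (0, 1)
  have e1 : dp (dq h) q p = fderiv ℝ (fderiv ℝ (Function.uncurry h)) (q, p) (0, 1) (1, 0) := by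
    have h1' : (fun y => fderiv ℝ (Function.uncurry h) (q, y) ((1 : ℝ), (0 : ℝ)))
        = fun y => dq h q y := by funext y; exact (dq_eq hf q y).symm
    rw [h1'] at h1
    exact ((hasDerivAt_dq_p hf q p).unique h1)
  have e2 : dq (dp h) q p = fderiv ℝ (fderiv ℝ (Function.uncurry h)) (q, p) (1, 0) (0, 1) := by
    have h2' : (fun x => fderiv ℝ (Function.uncurry h) (x, p) ((0 : ℝ), (1 : ℝ)))
        = fun x => dp h x p := by funext x; exact (dp_eq hf x p).symm
    rw [h2'] at h2
    exact ((hasDerivAt_dp_q hf q p).unique h2)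
  rw [e1, e2]
  have hsym : IsSymmSndFDerivAt ℝ (Function.uncurry h) (q, p) :=
    (hf.contDiffAt).isSymmSndFDerivAt (by simp)
  exact hsym (0, 1) (1, 0)

lemma continuous_dq (hf : ContDiff ℝ 2 (Function.uncurry h)) :
    Continuous (fun z : ℝ × ℝ => dq h z.1 z.2) := by
  have : (fun z : ℝ × ℝ => dq h z.1 z.2)
      = fun z => fderiv ℝ (Function.uncurry h) z (1, 0) := by
    funext z; exact dq_eq hf z.1 z.2
  rw [this]
  exact (ContinuousLinearMap.apply ℝ ℝ ((1 : ℝ), (0 : ℝ))).continuous.comp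
    (contDiff_A hf).continuous

lemma continuous_dp (hf : ContDiff ℝ 2 (Function.uncurry h)) :
    Continuous (fun z : ℝ × ℝ => dp h z.1 z.2) := by
  have : (fun z : ℝ × ℝ => dp h z.1 z.2)
      = fun z => fderiv ℝ (Function.uncurry h) z (0, 1) := by
    funext z; exact dp_eq hf z.1 z.2
  rw [this]
  exact (ContinuousLinearMap.apply ℝ ℝ ((0 : ℝ), (1 : ℝ))).continuous.comp
    (contDiff_A hf).continuous

lemma continuous_B (hf : ContDiff ℝ 2 (Function.uncurry h)) :
    Continuous (fderiv ℝ (fderiv ℝ (Function.uncurry h))) :=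
  (contDiff_A hf).continuous_fderiv one_ne_zero

lemma continuous_dqdq (hf : ContDiff ℝ 2 (Function.uncurry h)) :
    Continuous (fun z : ℝ × ℝ => dq (dq h) z.1 z.2) := by
  have : (fun z : ℝ × ℝ => dq (dq h) z.1 z.2)
      = fun z => fderiv ℝ (fderiv ℝ (Function.uncurry h)) z (1, 0) (1, 0) := by
    funext z; exact ((hasDerivAt_dq_q hf z.1 z.2).unique (by
      have h1' : (fun x => fderiv ℝ (Function.uncurry h) (x, z.2) ((1:ℝ), (0:ℝ)))
          = fun x => dq h x z.2 := by funext x; exact (dq_eq hf x z.2).symm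
      have := hasDerivAt_A_q hf z.1 z.2 (1, 0)
      rwa [h1'] at this))
  rw [this]
  exact (ContinuousLinearMap.apply ℝ ℝ ((1:ℝ),(0:ℝ))).continuous.comp
    ((ContinuousLinearMap.apply ℝ ((ℝ×ℝ) →L[ℝ] ℝ) ((1:ℝ),(0:ℝ))).continuous.comp
      (continuous_B hf))

lemma continuous_dqdp (hf : ContDiff ℝ 2 (Function.uncurry h)) :
    Continuous (fun z : ℝ × ℝ => dq (dp h) z.1 z.2) := by
  have : (fun z : ℝ × ℝ => dq (dp h) z.1 z.2)
      = fun z => fderiv ℝ (fderiv ℝ (Function.uncurry h)) z (1, 0) (0, 1) := by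
    funext z; exact ((hasDerivAt_dp_q hf z.1 z.2).unique (by
      have h1' : (fun x => fderiv ℝ (Function.uncurry h) (x, z.2) ((0:ℝ), (1:ℝ)))
          = fun x => dp h x z.2 := by funext x; exact (dp_eq hf x z.2).symm
      have := hasDerivAt_A_q hf z.1 z.2 (0, 1)
      rwa [h1'] at this))
  rw [this]
  exact (ContinuousLinearMap.apply ℝ ℝ ((0:ℝ),(1:ℝ))).continuous.comp
    ((ContinuousLinearMap.apply ℝ ((ℝ×ℝ) →L[ℝ] ℝ) ((1:ℝ),(0:ℝ))).continuous.comp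
      (continuous_B hf))

lemma hasDerivAt_h_q (hf : ContDiff ℝ 2 (Function.uncurry h)) (q p : ℝ) :
    HasDerivAt (fun x => h x p) (dq h q p) q :=
  (hasDerivAt_q hf q p).differentiableAt.hasDerivAt

lemma hasDerivAt_h_p (hf : ContDiff ℝ 2 (Function.uncurry h)) (q p : ℝ) :
    HasDerivAt (fun y => h q y) (dp h q p) p :=
  (hasDerivAt_p hf q p).differentiableAt.hasDerivAt

lemma hasDerivAt_Omeg {ω : ℝ → ℝ} (hω : Continuous ω) (p : ℝ) :
    HasDerivAt (Omeg ω) (ω p) p :=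
  intervalIntegral.integral_hasDerivAt_right (hω.intervalIntegrable _ _)
    hω.aestronglyMeasurable.stronglyMeasurableAtFilter hω.continuousAt

lemma continuous_Omeg {ω : ℝ → ℝ} (hω : Continuous ω) : Continuous (Omeg ω) := by
  have : Differentiable ℝ (Omeg ω) := fun p => (hasDerivAt_Omeg hω p).differentiableAt
  exact this.continuous

/-- q-derivative of the flow force integrand (= p-derivative of `Kfun`). -/
def Gq (ω : ℝ → ℝ) (r : ℝ) (h : ℝ → ℝ → ℝ) (q p : ℝ) : ℝ :=
  -(dq h q p * dq (dq h) q p) / dp h q p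
    - (1 - (dq h q p) ^ 2) * dq (dp h) q p / (2 * (dp h q p) ^ 2)
    - dq h q p * dp h q p
    - (h q p + Omeg ω p - Omeg ω 1 - r) * dq (dp h) q p

/-- The flux function whose p-derivative is `Gq`. -/
def Kfun (ω : ℝ → ℝ) (r : ℝ) (h : ℝ → ℝ → ℝ) (q p : ℝ) : ℝ :=
  -(dq h q p) * ((1 + (dq h q p) ^ 2) / (2 * (dp h q p) ^ 2)
    + h q p + Omeg ω p - Omeg ω 1 - r)

lemma hasDerivAt_integrand (hf : ContDiff ℝ 2 (Function.uncurry h))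
    {ω : ℝ → ℝ} {r : ℝ} (q p : ℝ) (hb : dp h q p ≠ 0) :
    HasDerivAt (fun x =>
        ((1 - (dq h x p) ^ 2) / (2 * (dp h x p) ^ 2) - h x p - Omeg ω p + Omeg ω 1 + r)
          * dp h x p)
      (Gq ω r h q p) q := by
  have ha := hasDerivAt_dq_q hf q p
  have hbq := hasDerivAt_dp_q hf q p
  have hh := hasDerivAt_h_q hf q p
  have hsq : HasDerivAt (fun x => (dq h x p) ^ 2) (2 * dq h q p ^ 1 * dq (dq h) q p) q :=
    ha.pow 2
  have num : HasDerivAt (fun x => 1 - (dq h x p) ^ 2)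
      (0 - 2 * dq h q p ^ 1 * dq (dq h) q p) q := (hasDerivAt_const q 1).sub hsq
  have den : HasDerivAt (fun x => 2 * (dp h x p) ^ 2)
      (2 * (2 * dp h q p ^ 1 * dq (dp h) q p)) q := (hbq.pow 2).const_mul 2
  have hden : 2 * (dp h q p) ^ 2 ≠ 0 := by positivity
  have quot := num.div den hden
  have first := (((quot.sub hh).sub_const (Omeg ω p)).add_const (Omeg ω 1)).add_const r
  have total := first.mul hbq
  refine total.congr_deriv (Eq.symm ?_)
  simp only [Pi.div_apply, Pi.add_apply, Pi.sub_apply, Pi.neg_apply]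
  unfold Gq
  field_simp
  ring

lemma hasDerivAt_K (hf : ContDiff ℝ 2 (Function.uncurry h))
    {ω : ℝ → ℝ} (hω : Continuous ω) {r : ℝ} (q p : ℝ) (hb : 0 < dp h q p)
    (pde : (1 + (dq h q p) ^ 2) / (dp h q p) ^ 2 * dp (dp h) q p
      - 2 * (dq h q p) / (dp h q p) * dp (dq h) q p
      + dq (dq h) q p - ω p * dp h q p = 0) :
    HasDerivAt (fun y => Kfun ω r h q y) (Gq ω r h q p) p := by
  have ha := hasDerivAt_dq_p hf q p
  have hbp := hasDerivAt_dp_p hf q p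
  have hh := hasDerivAt_h_p hf q p
  have hO := hasDerivAt_Omeg hω p
  have hb' : dp h q p ≠ 0 := ne_of_gt hb
  have hsq : HasDerivAt (fun y => (dq h q y) ^ 2) (2 * dq h q p ^ 1 * dp (dq h) q p) p :=
    ha.pow 2
  have num : HasDerivAt (fun y => 1 + (dq h q y) ^ 2)
      (0 + 2 * dq h q p ^ 1 * dp (dq h) q p) p := (hasDerivAt_const p 1).add hsq
  have den : HasDerivAt (fun y => 2 * (dp h q y) ^ 2)
      (2 * (2 * dp h q p ^ 1 * dp (dp h) q p)) p := (hbp.pow 2).const_mul 2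
  have hden : 2 * (dp h q p) ^ 2 ≠ 0 := by positivity
  have quot := num.div den hden
  have inner := (((quot.add hh).add hO).sub_const (Omeg ω 1)).sub_const r
  have total := (ha.neg).mul inner
  refine total.congr_deriv (Eq.symm ?_)
  simp only [Pi.div_apply, Pi.add_apply, Pi.sub_apply, Pi.neg_apply]
  unfold Gq
  rw [schwarz hf q p] at *
  set a := dq h q p
  set b := dp h q p
  set bq := dq (dp h) q p
  set bp := dp (dp h) q p
  set aq := dq (dq h) q p
  field_simp at pde
  field_simp
  linear_combination (-(2:ℝ) * a) * pde

/-- continuity of `Gq` on the strip. -/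
lemma continuousOn_Gq (hf : ContDiff ℝ 2 (Function.uncurry h))
    {ω : ℝ → ℝ} (hω : Continuous ω) {r : ℝ}
    (hpos : ∀ q : ℝ, ∀ p ∈ Icc (0:ℝ) 1, 0 < dp h q p) :
    ContinuousOn (fun z : ℝ × ℝ => Gq ω r h z.1 z.2) {z : ℝ × ℝ | z.2 ∈ Icc (0:ℝ) 1} := by
  have ca := (continuous_dq hf).continuousOn (s := {z : ℝ × ℝ | z.2 ∈ Icc (0:ℝ) 1})
  have cb := (continuous_dp hf).continuousOn (s := {z : ℝ × ℝ | z.2 ∈ Icc (0:ℝ) 1})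
  have caq := (continuous_dqdq hf).continuousOn (s := {z : ℝ × ℝ | z.2 ∈ Icc (0:ℝ) 1})
  have cbq := (continuous_dqdp hf).continuousOn (s := {z : ℝ × ℝ | z.2 ∈ Icc (0:ℝ) 1})
  have ch : ContinuousOn (fun z : ℝ × ℝ => h z.1 z.2) {z : ℝ × ℝ | z.2 ∈ Icc (0:ℝ) 1} :=
    hf.continuous.continuousOn
  have cO : ContinuousOn (fun z : ℝ × ℝ => Omeg ω z.2) {z : ℝ × ℝ | z.2 ∈ Icc (0:ℝ) 1} :=
    ((continuous_Omeg hω).comp continuous_snd).continuousOn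
  have hbne : ∀ z ∈ {z : ℝ × ℝ | z.2 ∈ Icc (0:ℝ) 1}, dp h z.1 z.2 ≠ 0 :=
    fun z hz => ne_of_gt (hpos z.1 z.2 hz)
  have hbne2 : ∀ z ∈ {z : ℝ × ℝ | z.2 ∈ Icc (0:ℝ) 1}, 2 * (dp h z.1 z.2) ^ 2 ≠ 0 := by
    intro z hz
    have := hpos z.1 z.2 hz
    positivity
  exact ((((ca.mul caq).neg.div cb hbne).sub
    ((((continuousOn_const.sub (ca.pow 2)).mul cbq)).div
      (continuousOn_const.mul (cb.pow 2)) hbne2)).sub (ca.mul cb)).sub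
    ((((ch.add cO).sub continuousOn_const).sub continuousOn_const).mul cbq)

/-- continuity of the flow force integrand on the strip. -/
lemma continuousOn_integrand (hf : ContDiff ℝ 2 (Function.uncurry h))
    {ω : ℝ → ℝ} (hω : Continuous ω) {r : ℝ}
    (hpos : ∀ q : ℝ, ∀ p ∈ Icc (0:ℝ) 1, 0 < dp h q p) :
    ContinuousOn (fun z : ℝ × ℝ =>
        ((1 - (dq h z.1 z.2) ^ 2) / (2 * (dp h z.1 z.2) ^ 2) - h z.1 z.2 - Omeg ω z.2
          + Omeg ω 1 + r) * dp h z.1 z.2)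
      {z : ℝ × ℝ | z.2 ∈ Icc (0:ℝ) 1} := by
  have ca := (continuous_dq hf).continuousOn (s := {z : ℝ × ℝ | z.2 ∈ Icc (0:ℝ) 1})
  have cb := (continuous_dp hf).continuousOn (s := {z : ℝ × ℝ | z.2 ∈ Icc (0:ℝ) 1})
  have ch : ContinuousOn (fun z : ℝ × ℝ => h z.1 z.2) {z : ℝ × ℝ | z.2 ∈ Icc (0:ℝ) 1} :=
    hf.continuous.continuousOn
  have cO : ContinuousOn (fun z : ℝ × ℝ => Omeg ω z.2) {z : ℝ × ℝ | z.2 ∈ Icc (0:ℝ) 1} :=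
    ((continuous_Omeg hω).comp continuous_snd).continuousOn
  have hbne2 : ∀ z ∈ {z : ℝ × ℝ | z.2 ∈ Icc (0:ℝ) 1}, 2 * (dp h z.1 z.2) ^ 2 ≠ 0 := by
    intro z hz
    have := hpos z.1 z.2 hz
    positivity
  exact (((((continuousOn_const.sub (ca.pow 2)).div
    (continuousOn_const.mul (cb.pow 2)) hbne2).sub ch).sub cO).add
    continuousOn_const |>.add continuousOn_const).mul cb

end FF
end

/-- for a solution `h` of the height system, the flow force
`F(q) = ∫₀¹ ((1 − h_q²)/(2h_p²) − h − Ω + Ω(1) + r) h_p dp` is independent of `q`, i.e.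
`F'(q) = 0` for all `q`. -/
theorem stmt11 (ω : ℝ → ℝ) (hω : Continuous ω) (r : ℝ) (h : ℝ → ℝ → ℝ)
    (hsol : HeightSol ω r h) :
    ∀ q : ℝ, HasDerivAt (flowForce ω r h) 0 q := by
  intro q₀
  have hf := hsol.smooth
  have hpos := hsol.hp_pos
  set S : Set (ℝ × ℝ) := {z : ℝ × ℝ | z.2 ∈ Icc (0:ℝ) 1} with hS
  have hIoc : Set.uIoc (0:ℝ) 1 = Ioc (0:ℝ) 1 := uIoc_of_le (by norm_num)
  have hIcc : uIcc (0:ℝ) 1 = Icc (0:ℝ) 1 := uIcc_of_le (by norm_num)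
  -- restriction of a continuous-on-strip function to a vertical line
  have hcomp : ∀ g : ℝ × ℝ → ℝ, ContinuousOn g S →
      ∀ x : ℝ, ContinuousOn (fun p => g (x, p)) (Icc (0:ℝ) 1) := by
    intro g hg x
    exact hg.comp (Continuous.continuousOn (continuous_const.prodMk continuous_id))
      (fun p hp => hp)
  have hcontF := FF.continuousOn_integrand (ω := ω) (r := r) hf hω hpos
  have hcontG := FF.continuousOn_Gq (ω := ω) (r := r) hf hω hpos
  -- uniform bound for Gq on a compact neighbourhood
  obtain ⟨C, hC⟩ : ∃ C : ℝ, ∀ z ∈ Icc (q₀ - 1) (q₀ + 1) ×ˢ Icc (0:ℝ) 1,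
      ‖FF.Gq ω r h z.1 z.2‖ ≤ C := by
    apply (isCompact_Icc.prod isCompact_Icc).exists_bound_of_continuousOn
    exact hcontG.mono (fun z hz => hz.2)
  -- differentiate under the integral sign
  have key := intervalIntegral.hasDerivAt_integral_of_dominated_loc_of_deriv_le
    (F := fun x p => ((1 - (dq h x p) ^ 2) / (2 * (dp h x p) ^ 2)
        - h x p - Omeg ω p + Omeg ω 1 + r) * dp h x p)
    (F' := fun x p => FF.Gq ω r h x p) (x₀ := q₀) (a := (0:ℝ)) (b := (1:ℝ))
    (bound := fun _ => C) (μ := volume) (s := Metric.ball q₀ 1) (Metric.ball_mem_nhds q₀ one_pos)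
    (Filter.Eventually.of_forall (fun x => by
      rw [hIoc]
      exact (((hcomp _ hcontF x).mono Ioc_subset_Icc_self).aestronglyMeasurable
        measurableSet_Ioc)))
    (by
      apply ContinuousOn.intervalIntegrable
      rw [hIcc]
      exact hcomp _ hcontF q₀)
    (by
      rw [hIoc]
      exact (((hcomp _ hcontG q₀).mono Ioc_subset_Icc_self).aestronglyMeasurable
        measurableSet_Ioc))
    (Filter.Eventually.of_forall (fun p hp x hx => by
      refine hC (x, p) ⟨?_, ?_⟩
      · have := abs_lt.1 (by simpa [Real.dist_eq] using Metric.mem_ball.1 hx)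
        constructor <;> linarith [this.1, this.2]
      · exact Ioc_subset_Icc_self (hIoc ▸ hp)))
    intervalIntegrable_const
    (Filter.Eventually.of_forall (fun p hp x _ => by
      have hp' : p ∈ Icc (0:ℝ) 1 := Ioc_subset_Icc_self (hIoc ▸ hp)
      exact FF.hasDerivAt_integrand hf x p (ne_of_gt (hpos x p hp'))))
  obtain ⟨-, hder⟩ := key
  -- compute the integral of Gq by the fundamental theorem of calculus
  have hint' : IntervalIntegrable (fun p => FF.Gq ω r h q₀ p) volume 0 1 := by
    apply ContinuousOn.intervalIntegrable
    rw [hIcc]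
    exact hcomp _ hcontG q₀
  have hftc := intervalIntegral.integral_eq_sub_of_hasDerivAt
    (f := fun y => FF.Kfun ω r h q₀ y) (f' := fun p => FF.Gq ω r h q₀ p)
    (fun p hp => by
      rw [hIcc] at hp
      exact FF.hasDerivAt_K hf hω q₀ p (hpos q₀ p hp) (hsol.pde q₀ p hp))
    hint'
  have hKtop : FF.Kfun ω r h q₀ 1 = 0 := by
    unfold FF.Kfun
    linear_combination (-(dq h q₀ 1)) * (hsol.top q₀)
  have hK0 : FF.Kfun ω r h q₀ 0 = 0 := by
    have hbot : (fun x : ℝ => h x 0) = fun _ => (0:ℝ) := funext fun x => hsol.bot x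
    have ha0 : dq h q₀ 0 = 0 := by
      show deriv (fun x => h x 0) q₀ = 0
      rw [hbot]
      exact deriv_const _ _
    unfold FF.Kfun
    rw [ha0]
    ring
  have hftc' : (∫ p in (0:ℝ)..1, FF.Gq ω r h q₀ p)
      = FF.Kfun ω r h q₀ 1 - FF.Kfun ω r h q₀ 0 := hftc
  have hzero : (∫ p in (0:ℝ)..1, FF.Gq ω r h q₀ p) = 0 := by
    rw [hftc', hKtop, hK0, sub_zero]
  have hder2 : HasDerivAt (flowForce ω r h) (∫ p in (0:ℝ)..1, FF.Gq ω r h q₀ p) q₀ := hder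
  rw [hzero] at hder2
  exact hder2
end

section
/- Let h solve the height system with Bernoulli constant r, let s > s₀, set w(q,p) = h(q,p) − H(p;s), and let F be the flow force of h. Then for every q ∈ ℝ: 2(F − σ(s;r)) = 2 (r − R(s)) w(q,1) − w(q,1)² + ∫₀¹ ( w_p(q,p)²/(h_p(q,p) H_p(p;s)²) − w_q(q,p)²/h_p(q,p) ) dp. -/
open MeasureTheory Set Filter

/-- for a solution `h` of the height system with flow force `F`, `s > s₀`
and `w = h − H(·;s)`, one has for every `q`:
`2(F − σ(s;r)) = 2(r − R(s)) w(q,1) − w(q,1)² + ∫₀¹ (w_p²/(h_p H_p²) − w_q²/h_p) dp`. -/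
theorem stmt12 (ω : ℝ → ℝ) (hω : Continuous ω) (r : ℝ) (h : ℝ → ℝ → ℝ)
    (hsol : HeightSol ω r h)
    (s : ℝ) (hs : s0 ω < s)
    (F : ℝ) (hF : ∀ q : ℝ, F = flowForce ω r h q) :
    ∀ q : ℝ,
      2 * (F - sigmaFun ω s r) =
        2 * (r - RR ω s) * wfun ω s h q 1 - (wfun ω s h q 1) ^ 2 +
        ∫ p in (0:ℝ)..1,
          ((dp (wfun ω s h) q p) ^ 2 / (dp h q p * (Hp ω p s) ^ 2)
            - (dq (wfun ω s h) q p) ^ 2 / dp h q p) := by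
  intro q
  -- derivative and continuity of Omeg
  have hΩ : ∀ p : ℝ, HasDerivAt (Omeg ω) (ω p) p := by
    intro p
    have hint : IntervalIntegrable ω MeasureTheory.volume 0 p := hω.intervalIntegrable _ _
    have hmeas : StronglyMeasurableAtFilter ω (nhds p) MeasureTheory.volume :=
      ⟨Set.univ, Filter.univ_mem, hω.aestronglyMeasurable.restrict⟩
    exact intervalIntegral.integral_hasDerivAt_right hint hmeas hω.continuousAt
  have hΩdiff : Differentiable ℝ (Omeg ω) := fun p => (hΩ p).differentiableAt
  have hΩcont : Continuous (Omeg ω) := hΩdiff.continuous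
  -- positivity of s² - 2Ω on [0,1]
  have hs0 : 0 ≤ s0 ω := Real.sqrt_nonneg _
  have hspos : 0 < s := lt_of_le_of_lt hs0 hs
  have hpos : ∀ p ∈ Icc (0:ℝ) 1, 0 < s ^ 2 - 2 * Omeg ω p := by
    intro p hp
    have hmem : 2 * Omeg ω p ∈ (fun p => 2 * Omeg ω p) '' Icc (0:ℝ) 1 := ⟨p, hp, rfl⟩
    have hbdd : BddAbove ((fun p => 2 * Omeg ω p) '' Icc (0:ℝ) 1) :=
      (isCompact_Icc.image (continuous_const.mul hΩcont)).bddAbove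
    have hle : 2 * Omeg ω p ≤ sSup ((fun p => 2 * Omeg ω p) '' Icc (0:ℝ) 1) :=
      le_csSup hbdd hmem
    rcases le_or_gt (sSup ((fun p => 2 * Omeg ω p) '' Icc (0:ℝ) 1)) 0 with h0 | h0
    · nlinarith
    · have hM : s0 ω ^ 2 = sSup ((fun p => 2 * Omeg ω p) '' Icc (0:ℝ) 1) :=
        Real.sq_sqrt h0.le
      nlinarith
  have hsqrt_pos : ∀ p ∈ Icc (0:ℝ) 1, 0 < Real.sqrt (s ^ 2 - 2 * Omeg ω p) :=
    fun p hp => Real.sqrt_pos.2 (hpos p hp)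
  have hHp_pos : ∀ p ∈ Icc (0:ℝ) 1, 0 < Hp ω p s := by
    intro p hp
    simpa [Hp] using inv_pos.2 (hsqrt_pos p hp)
  -- continuity and measurability of Hp
  have hsqrt_cont : Continuous fun p' => Real.sqrt (s ^ 2 - 2 * Omeg ω p') :=
    Real.continuous_sqrt.comp (continuous_const.sub (continuous_const.mul hΩcont))
  have hHpCA : ∀ p ∈ Icc (0:ℝ) 1, ContinuousAt (fun p' => Hp ω p' s) p := by
    intro p hp
    have : ContinuousAt (fun p' => (Real.sqrt (s ^ 2 - 2 * Omeg ω p'))⁻¹) p :=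
      hsqrt_cont.continuousAt.inv₀ (ne_of_gt (hsqrt_pos p hp))
    simpa [Hp] using this
  have hHpCO : ContinuousOn (fun p' => Hp ω p' s) (Icc (0:ℝ) 1) :=
    fun p hp => (hHpCA p hp).continuousWithinAt
  have hHpMeas : AEStronglyMeasurable (fun p' => Hp ω p' s) MeasureTheory.volume := by
    have : Measurable fun p' => Hp ω p' s := by
      simp only [Hp]
      exact hsqrt_cont.measurable.inv
    exact this.aestronglyMeasurable
  -- derivative of Hfun on [0,1]
  have hHfunDeriv : ∀ p ∈ Icc (0:ℝ) 1, HasDerivAt (fun p' => Hfun ω p' s) (Hp ω p s) p := by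
    intro p hp
    have hint : IntervalIntegrable (fun p' => Hp ω p' s) MeasureTheory.volume 0 p := by
      apply ContinuousOn.intervalIntegrable
      apply hHpCO.mono
      rw [uIcc_of_le hp.1]
      exact Icc_subset_Icc le_rfl hp.2
    have hmeas : StronglyMeasurableAtFilter (fun p' => Hp ω p' s) (nhds p) MeasureTheory.volume :=
      ⟨Set.univ, Filter.univ_mem, hHpMeas.restrict⟩
    simpa [Hfun] using intervalIntegral.integral_hasDerivAt_right hint hmeas (hHpCA p hp)
  have hHfunCO : ContinuousOn (fun p' => Hfun ω p' s) (Icc (0:ℝ) 1) :=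
    fun p hp => ((hHfunDeriv p hp).continuousAt).continuousWithinAt
  -- slice regularity of h
  have hcd : ContDiff ℝ 2 fun y => h q y :=
    hsol.smooth.comp (contDiff_const.prodMk contDiff_id)
  have hhd : ∀ p : ℝ, HasDerivAt (fun y => h q y) (dp h q p) p :=
    fun p => ((hcd.differentiable two_ne_zero) p).hasDerivAt
  have hcont_h : Continuous fun p => h q p := hcd.continuous
  have hcont_dp : Continuous fun p => dp h q p := hcd.continuous_deriv one_le_two
  -- continuity of p ↦ dq h q p
  have hfd : Continuous (fderiv ℝ (Function.uncurry h)) :=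
    hsol.smooth.continuous_fderiv two_ne_zero
  have hdqeq : ∀ p : ℝ, dq h q p = fderiv ℝ (Function.uncurry h) (q, p) (1, 0) := by
    intro p
    have h1 : HasDerivAt (fun x : ℝ => ((x : ℝ), p)) ((1:ℝ), (0:ℝ)) q :=
      (hasDerivAt_id q).prodMk (hasDerivAt_const q p)
    have h2 : HasFDerivAt (Function.uncurry h) (fderiv ℝ (Function.uncurry h) (q, p)) (q, p) :=
      (hsol.smooth.differentiable two_ne_zero (q, p)).hasFDerivAt
    exact (h2.comp_hasDerivAt q h1).deriv
  have hcont_dq : Continuous fun p => dq h q p := by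
    simp only [hdqeq]
    exact (hfd.comp (Continuous.prodMk_right q)).clm_apply continuous_const
  have hhp_pos : ∀ p ∈ Icc (0:ℝ) 1, 0 < dp h q p := fun p hp => hsol.hp_pos q p hp
  -- derivatives of w
  have hdqw : ∀ p : ℝ, dq (wfun ω s h) q p = dq h q p := by
    intro p
    simp only [dq, wfun]
    exact deriv_sub_const _
  have hdpw : ∀ p ∈ Icc (0:ℝ) 1, dp (wfun ω s h) q p = dp h q p - Hp ω p s := by
    intro p hp
    exact ((hhd p).sub (hHfunDeriv p hp)).deriv
  -- notation
  set c : ℝ := 2 * r - s ^ 2 + 2 * Omeg ω 1 with hcdef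
  set Φ : ℝ → ℝ := fun p => c * (h q p - Hfun ω p s) - (h q p) ^ 2 + (Hfun ω p s) ^ 2 with hΦdef
  set f1 : ℝ → ℝ := fun p =>
    ((1 - (dq h q p) ^ 2) / (2 * (dp h q p) ^ 2) - h q p - Omeg ω p + Omeg ω 1 + r) * dp h q p
    with hf1def
  set f2 : ℝ → ℝ := fun p =>
    (1 / (2 * (Hp ω p s) ^ 2) - Hfun ω p s - Omeg ω p + Omeg ω 1 + r) * Hp ω p s with hf2def
  set f3 : ℝ → ℝ := fun p =>
    (dp h q p - Hp ω p s) ^ 2 / (dp h q p * (Hp ω p s) ^ 2) - (dq h q p) ^ 2 / dp h q p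
    with hf3def
  set G : ℝ → ℝ := fun p =>
    c * (dp h q p - Hp ω p s) - 2 * h q p * dp h q p + 2 * Hfun ω p s * Hp ω p s with hGdef
  have huIcc : uIcc (0:ℝ) 1 = Icc (0:ℝ) 1 := uIcc_of_le zero_le_one
  -- integrability
  have hne1 : ∀ p ∈ Icc (0:ℝ) 1, 2 * (dp h q p) ^ 2 ≠ 0 := by
    intro p hp
    have := hhp_pos p hp
    positivity
  have hne2 : ∀ p ∈ Icc (0:ℝ) 1, 2 * (Hp ω p s) ^ 2 ≠ 0 := by
    intro p hp
    have := hHp_pos p hp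
    positivity
  have hf1i : IntervalIntegrable f1 MeasureTheory.volume 0 1 := by
    apply ContinuousOn.intervalIntegrable
    rw [huIcc, hf1def]
    exact (((((continuousOn_const.sub ((hcont_dq.continuousOn).pow 2)).div
      (continuousOn_const.mul ((hcont_dp.continuousOn).pow 2)) hne1).sub
      hcont_h.continuousOn).sub hΩcont.continuousOn).add continuousOn_const).add
      continuousOn_const |>.mul hcont_dp.continuousOn
  have hf2i : IntervalIntegrable f2 MeasureTheory.volume 0 1 := by
    apply ContinuousOn.intervalIntegrable
    rw [huIcc, hf2def]
    exact ((((continuousOn_const.div (continuousOn_const.mul (hHpCO.pow 2)) hne2).sub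
      hHfunCO).sub hΩcont.continuousOn).add continuousOn_const).add
      continuousOn_const |>.mul hHpCO
  have hnef3a : ∀ p ∈ Icc (0:ℝ) 1, dp h q p * (Hp ω p s) ^ 2 ≠ 0 := by
    intro p hp
    have h1 := hhp_pos p hp
    have h2 := hHp_pos p hp
    positivity
  have hnef3b : ∀ p ∈ Icc (0:ℝ) 1, dp h q p ≠ 0 := fun p hp => (hhp_pos p hp).ne'
  have hf3i : IntervalIntegrable f3 MeasureTheory.volume 0 1 := by
    apply ContinuousOn.intervalIntegrable
    rw [huIcc, hf3def]
    exact (((hcont_dp.continuousOn.sub hHpCO).pow 2).div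
      (hcont_dp.continuousOn.mul (hHpCO.pow 2)) hnef3a).sub
      (((hcont_dq.continuousOn).pow 2).div hcont_dp.continuousOn hnef3b)
  have hGi : IntervalIntegrable G MeasureTheory.volume 0 1 := by
    apply ContinuousOn.intervalIntegrable
    rw [huIcc, hGdef]
    exact ((continuousOn_const.mul (hcont_dp.continuousOn.sub hHpCO)).sub
      ((continuousOn_const.mul hcont_h.continuousOn).mul hcont_dp.continuousOn)).add
      ((continuousOn_const.mul hHfunCO).mul hHpCO)
  -- rewrite the statement's integral as ∫ f3
  have hI3 : (∫ p in (0:ℝ)..1,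
      ((dp (wfun ω s h) q p) ^ 2 / (dp h q p * (Hp ω p s) ^ 2)
        - (dq (wfun ω s h) q p) ^ 2 / dp h q p)) = ∫ p in (0:ℝ)..1, f3 p := by
    apply intervalIntegral.integral_congr
    intro p hp
    rw [huIcc] at hp
    simp only [hdpw p hp, hdqw p, hf3def]
  -- pointwise algebraic identity
  have hcongr : EqOn (fun p => 2 * f1 p - 2 * f2 p - f3 p) G (uIcc (0:ℝ) 1) := by
    intro p hp
    rw [huIcc] at hp
    have ha : (0:ℝ) < dp h q p := hhp_pos p hp
    have hu : (0:ℝ) < Real.sqrt (s ^ 2 - 2 * Omeg ω p) := hsqrt_pos p hp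
    have hsq : Real.sqrt (s ^ 2 - 2 * Omeg ω p) ^ 2 = s ^ 2 - 2 * Omeg ω p :=
      Real.sq_sqrt (hpos p hp).le
    have hΩp : Omeg ω p = (s ^ 2 - Real.sqrt (s ^ 2 - 2 * Omeg ω p) ^ 2) / 2 := by
      linarith
    simp only [hf1def, hf2def, hf3def, hGdef, hcdef, Hp]
    set u := Real.sqrt (s ^ 2 - 2 * Omeg ω p) with hudef
    rw [hΩp]
    field_simp
    ring
  -- FTC
  have hFTC : ∫ p in (0:ℝ)..1, G p = Φ 1 - Φ 0 := by
    apply intervalIntegral.integral_eq_sub_of_hasDerivAt _ hGi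
    intro p hp
    rw [huIcc] at hp
    have h1 := ((hhd p).sub (hHfunDeriv p hp)).const_mul c
    have h2 := (hhd p).pow 2
    have h3 := (hHfunDeriv p hp).pow 2
    have hcomb := (h1.sub h2).add h3
    convert hcomb using 1
    · rfl
    simp only [hGdef]
    push_cast
    ring
  -- combine integrals
  have hsplit : ∫ p in (0:ℝ)..1, (2 * f1 p - 2 * f2 p - f3 p) =
      2 * (∫ p in (0:ℝ)..1, f1 p) - 2 * (∫ p in (0:ℝ)..1, f2 p) - ∫ p in (0:ℝ)..1, f3 p := by
    rw [intervalIntegral.integral_sub ((hf1i.const_mul 2).sub (hf2i.const_mul 2)) hf3i,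
      intervalIntegral.integral_sub (hf1i.const_mul 2) (hf2i.const_mul 2),
      intervalIntegral.integral_const_mul, intervalIntegral.integral_const_mul]
  have hkey : 2 * (∫ p in (0:ℝ)..1, f1 p) - 2 * (∫ p in (0:ℝ)..1, f2 p)
      - (∫ p in (0:ℝ)..1, f3 p) = Φ 1 - Φ 0 := by
    rw [← hsplit, intervalIntegral.integral_congr hcongr, hFTC]
  -- evaluate Φ and conclude
  have hH0 : Hfun ω 0 s = 0 := intervalIntegral.integral_same
  have hΦ0 : Φ 0 = 0 := by
    simp [hΦdef, hsol.bot q, hH0]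
  have hfinal : Φ 1 - Φ 0 =
      2 * (r - RR ω s) * wfun ω s h q 1 - (wfun ω s h q 1) ^ 2 := by
    rw [hΦ0]
    simp only [hΦdef, hcdef, wfun, RR, dd]
    ring
  have hflow : flowForce ω r h q = ∫ p in (0:ℝ)..1, f1 p := by
    rw [flowForce, hf1def]
  have hsig : sigmaFun ω s r = ∫ p in (0:ℝ)..1, f2 p := by
    rw [sigmaFun, hf2def]
  rw [hF q, hflow, hsig, hI3]
  linarith [hkey, hfinal]
end

section
/- Let h solve the height system with Bernoulli constant r, let s > s₀, set w(q,p) = h(q,p) − H(p;s), and let Φ = Φ^{(s)} be the flow force flux function. Then for all (q,p) ∈ S: Φ_p(q,p) = w_p(q,p)²/(h_p(q,p) H_p(p;s)²) − w_q(q,p)²/h_p(q,p) and Φ_q(q,p) = −w_q(q,p) ( (1 + w_q(q,p)²)/h_p(q,p)² − 1/H_p(p;s)² ). -/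
open MeasureTheory Set Filter

private lemma hasDerivAt_slice_q {g : ℝ × ℝ → ℝ} (hg : Differentiable ℝ g) (q p : ℝ) :
    HasDerivAt (fun x => g (x, p)) (fderiv ℝ g (q, p) (1, 0)) q := by
  have h1 : HasDerivAt (fun x : ℝ => (x, p)) ((1:ℝ), (0:ℝ)) q :=
    (hasDerivAt_id q).prodMk (hasDerivAt_const q p)
  exact (hg (q, p)).hasFDerivAt.comp_hasDerivAt q h1

private lemma hasDerivAt_slice_p {g : ℝ × ℝ → ℝ} (hg : Differentiable ℝ g) (q p : ℝ) :
    HasDerivAt (fun y => g (q, y)) (fderiv ℝ g (q, p) (0, 1)) p := by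
  have h1 : HasDerivAt (fun y : ℝ => (q, y)) ((0:ℝ), (1:ℝ)) p :=
    (hasDerivAt_const p q).prodMk (hasDerivAt_id p)
  exact (hg (q, p)).hasFDerivAt.comp_hasDerivAt p h1

private lemma mkQ {f : ℝ → ℝ → ℝ} {g : ℝ × ℝ → ℝ} (hg : Differentiable ℝ g)
    (hf : ∀ q p, f q p = g (q, p)) (q p : ℝ) :
    HasDerivAt (fun x => f x p) (dq f q p) q ∧ dq f q p = fderiv ℝ g (q, p) (1, 0) := by
  have h1 : (fun x => f x p) = fun x => g (x, p) := funext fun x => hf x p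
  have h2 := hasDerivAt_slice_q hg q p
  have h3 : dq f q p = fderiv ℝ g (q, p) (1, 0) := by rw [dq, h1]; exact h2.deriv
  exact ⟨by rw [h3, h1]; exact h2, h3⟩

private lemma mkP {f : ℝ → ℝ → ℝ} {g : ℝ × ℝ → ℝ} (hg : Differentiable ℝ g)
    (hf : ∀ q p, f q p = g (q, p)) (q p : ℝ) :
    HasDerivAt (fun y => f q y) (dp f q p) p ∧ dp f q p = fderiv ℝ g (q, p) (0, 1) := by
  have h1 : (fun y => f q y) = fun y => g (q, y) := funext fun y => hf q y
  have h2 := hasDerivAt_slice_p hg q p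
  have h3 : dp f q p = fderiv ℝ g (q, p) (0, 1) := by rw [dp, h1]; exact h2.deriv
  exact ⟨by rw [h3, h1]; exact h2, h3⟩

/-- for a solution `h` of the height system, `s > s₀`, `w = h − H(·;s)` and
`Φ = Φ^{(s)}`, one has on `S`:
`Φ_p = w_p²/(h_p H_p²) − w_q²/h_p` and `Φ_q = −w_q ((1 + w_q²)/h_p² − 1/H_p²)`. -/
theorem stmt14 (ω : ℝ → ℝ) (hω : Continuous ω) (r : ℝ) (h : ℝ → ℝ → ℝ)
    (hsol : HeightSol ω r h)
    (s : ℝ) (hs : s0 ω < s) :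
    ∀ q : ℝ, ∀ p ∈ Icc (0:ℝ) 1,
      dp (Phi ω s h) q p =
        (dp (wfun ω s h) q p) ^ 2 / (dp h q p * (Hp ω p s) ^ 2)
          - (dq (wfun ω s h) q p) ^ 2 / dp h q p ∧
      dq (Phi ω s h) q p =
        -(dq (wfun ω s h) q p) *
          ((1 + (dq (wfun ω s h) q p) ^ 2) / (dp h q p) ^ 2 - 1 / (Hp ω p s) ^ 2) := by
  obtain ⟨hsm, hppos, hpde, _, hbot⟩ := hsol
  -- ## derivative machinery for h
  set u : ℝ × ℝ → ℝ := Function.uncurry h with hu_def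
  have hud : Differentiable ℝ u := hsm.differentiable (by norm_num)
  have hD1c : ContDiff ℝ 1 (fderiv ℝ u) := hsm.fderiv_right (by norm_num)
  have hD1d : Differentiable ℝ (fderiv ℝ u) := hD1c.differentiable (by norm_num)
  have hD2cont : Continuous (fderiv ℝ (fderiv ℝ u)) := hD1c.continuous_fderiv (by norm_num)
  set g1 : ℝ × ℝ → ℝ := fun z => fderiv ℝ u z (1, 0) with hg1
  set g2 : ℝ × ℝ → ℝ := fun z => fderiv ℝ u z (0, 1) with hg2
  have hg1d : Differentiable ℝ g1 := hD1d.clm_apply (differentiable_const _)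
  have hg2d : Differentiable ℝ g2 := hD1d.clm_apply (differentiable_const _)
  have hfd_g1 : ∀ (z : ℝ × ℝ) (v : ℝ × ℝ), fderiv ℝ g1 z v = (fderiv ℝ (fderiv ℝ u) z v) (1, 0) := by
    intro z v
    rw [hg1, fderiv_clm_apply (hD1d z) (differentiableAt_const _)]
    simp
  have hfd_g2 : ∀ (z : ℝ × ℝ) (v : ℝ × ℝ), fderiv ℝ g2 z v = (fderiv ℝ (fderiv ℝ u) z v) (0, 1) := by
    intro z v
    rw [hg2, fderiv_clm_apply (hD1d z) (differentiableAt_const _)]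
    simp
  have hdqh : ∀ q p, dq h q p = g1 (q, p) := fun q p => (hasDerivAt_slice_q hud q p).deriv
  have hdph : ∀ q p, dp h q p = g2 (q, p) := fun q p => (hasDerivAt_slice_p hud q p).deriv
  have hdqB : ∀ q p, HasDerivAt (fun x => h x p) (dq h q p) q :=
    fun q p => (mkQ hud (fun _ _ => rfl) q p).1
  have hdpB : ∀ q p, HasDerivAt (fun y => h q y) (dp h q p) p :=
    fun q p => (mkP hud (fun _ _ => rfl) q p).1
  have hQQ : ∀ q p, HasDerivAt (fun x => dq h x p) (dq (dq h) q p) q :=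
    fun q p => (mkQ hg1d hdqh q p).1
  have hQP : ∀ q p, HasDerivAt (fun x => dp h x p) (dq (dp h) q p) q :=
    fun q p => (mkQ hg2d hdph q p).1
  have hPQ : ∀ q p, HasDerivAt (fun y => dq h q y) (dp (dq h) q p) p :=
    fun q p => (mkP hg1d hdqh q p).1
  have hPP : ∀ q p, HasDerivAt (fun y => dp h q y) (dp (dp h) q p) p :=
    fun q p => (mkP hg2d hdph q p).1
  have hsymm : ∀ q p, dq (dp h) q p = dp (dq h) q p := by
    intro q p
    rw [(mkQ hg2d hdph q p).2, (mkP hg1d hdqh q p).2, hfd_g1, hfd_g2]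
    exact second_derivative_symmetric (fun y => (hud y).hasFDerivAt) ((hD1d (q, p)).hasFDerivAt) _ _
  have contA : Continuous (fun z : ℝ × ℝ => dq h z.1 z.2) := by
    have he : (fun z : ℝ × ℝ => dq h z.1 z.2) = g1 := funext fun z => hdqh z.1 z.2
    rw [he]; exact hg1d.continuous
  have contB : Continuous (fun z : ℝ × ℝ => dp h z.1 z.2) := by
    have he : (fun z : ℝ × ℝ => dp h z.1 z.2) = g2 := funext fun z => hdph z.1 z.2
    rw [he]; exact hg2d.continuous
  have cont_qq : Continuous (fun z : ℝ × ℝ => dq (dq h) z.1 z.2) := by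
    have he : (fun z : ℝ × ℝ => dq (dq h) z.1 z.2)
        = fun z => fderiv ℝ (fderiv ℝ u) z (1, 0) (1, 0) :=
      funext fun z => by rw [(mkQ hg1d hdqh z.1 z.2).2, hfd_g1]
    rw [he]; exact (hD2cont.clm_apply continuous_const).clm_apply continuous_const
  have cont_qp : Continuous (fun z : ℝ × ℝ => dq (dp h) z.1 z.2) := by
    have he : (fun z : ℝ × ℝ => dq (dp h) z.1 z.2)
        = fun z => fderiv ℝ (fderiv ℝ u) z (1, 0) (0, 1) :=
      funext fun z => by rw [(mkQ hg2d hdph z.1 z.2).2, hfd_g2]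
    rw [he]; exact (hD2cont.clm_apply continuous_const).clm_apply continuous_const
  -- ## vorticity primitive and stream facts
  have hΩ : ∀ p : ℝ, HasDerivAt (Omeg ω) (ω p) p := fun p =>
    intervalIntegral.integral_hasDerivAt_right (hω.intervalIntegrable 0 p)
      (hω.stronglyMeasurableAtFilter _ _) hω.continuousAt
  have contΩ : Continuous (Omeg ω) :=
    continuous_iff_continuousAt.2 fun p => (hΩ p).differentiableAt.continuousAt
  have cont2Ω : Continuous (fun p => 2 * Omeg ω p) := continuous_const.mul contΩ
  have hbdd : BddAbove ((fun p => 2 * Omeg ω p) '' Icc (0:ℝ) 1) :=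
    (isCompact_Icc.image cont2Ω).bddAbove
  have h0mem : (0:ℝ) ∈ (fun p => 2 * Omeg ω p) '' Icc (0:ℝ) 1 := by
    refine ⟨0, by norm_num, ?_⟩
    simp [Omeg]
  have hsSup0 : 0 ≤ sSup ((fun p => 2 * Omeg ω p) '' Icc (0:ℝ) 1) := le_csSup hbdd h0mem
  have hs0nn : 0 ≤ s0 ω := Real.sqrt_nonneg _
  have hs2 : sSup ((fun p => 2 * Omeg ω p) '' Icc (0:ℝ) 1) < s ^ 2 := by
    have h1 : s0 ω ^ 2 < s ^ 2 := by
      apply pow_lt_pow_left₀ hs hs0nn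
      norm_num
    have h2 : s0 ω ^ 2 = sSup ((fun p => 2 * Omeg ω p) '' Icc (0:ℝ) 1) := Real.sq_sqrt hsSup0
    linarith
  have hpos : ∀ p ∈ Icc (0:ℝ) 1, 0 < s ^ 2 - 2 * Omeg ω p := by
    intro p hp
    have hle : 2 * Omeg ω p ≤ sSup ((fun p => 2 * Omeg ω p) '' Icc (0:ℝ) 1) :=
      le_csSup hbdd (mem_image_of_mem _ hp)
    linarith
  have hcont_m : Continuous (fun p => s ^ 2 - 2 * Omeg ω p) := continuous_const.sub cont2Ω
  have hUo : IsOpen {p : ℝ | 0 < s ^ 2 - 2 * Omeg ω p} := isOpen_lt continuous_const hcont_m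
  obtain ⟨ε0, hε0, hball0⟩ := Metric.isOpen_iff.1 hUo 0 (hpos 0 (by norm_num))
  obtain ⟨ε1, hε1, hball1⟩ := Metric.isOpen_iff.1 hUo 1 (hpos 1 (by norm_num))
  obtain ⟨a, b, ha, hb, hW⟩ : ∃ a b : ℝ, a < 0 ∧ 1 < b ∧ ∀ p ∈ Ioo a b, 0 < s ^ 2 - 2 * Omeg ω p := by
    refine ⟨-(ε0 / 2), 1 + ε1 / 2, by linarith, by linarith, ?_⟩
    intro p hp
    obtain ⟨hp1, hp2⟩ := hp
    rcases lt_or_ge p 0 with hneg | hge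
    · exact hball0 (show p ∈ Metric.ball 0 ε0 by
        rw [Metric.mem_ball, Real.dist_eq, sub_zero, abs_of_neg hneg]; linarith)
    rcases le_or_gt p 1 with hle | hgt
    · exact hpos p ⟨hge, hle⟩
    · exact hball1 (show p ∈ Metric.ball 1 ε1 by
        rw [Metric.mem_ball, Real.dist_eq, abs_of_pos (by linarith : (0:ℝ) < p - 1)]; linarith)
  have hIccW : Icc (0:ℝ) 1 ⊆ Ioo a b := fun p hp => ⟨lt_of_lt_of_le ha hp.1, lt_of_le_of_lt hp.2 hb⟩
  have h0W : (0:ℝ) ∈ Ioo a b := hIccW ⟨le_refl 0, by norm_num⟩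
  have hsqrt_pos : ∀ p ∈ Ioo a b, 0 < Real.sqrt (s ^ 2 - 2 * Omeg ω p) :=
    fun p hp => Real.sqrt_pos.2 (hW p hp)
  have hHpPos : ∀ p ∈ Ioo a b, 0 < Hp ω p s := fun p hp => inv_pos.2 (hsqrt_pos p hp)
  have hHpsq : ∀ p ∈ Ioo a b, (Hp ω p s) ^ 2 = (s ^ 2 - 2 * Omeg ω p)⁻¹ := by
    intro p hp
    rw [Hp, inv_pow, Real.sq_sqrt (le_of_lt (hW p hp))]
  have hHpsq' : ∀ p ∈ Ioo a b, 1 / (Hp ω p s) ^ 2 = s ^ 2 - 2 * Omeg ω p := by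
    intro p hp
    rw [hHpsq p hp, one_div, inv_inv]
  have contHp : ContinuousOn (fun p => Hp ω p s) (Ioo a b) := by
    apply ContinuousOn.inv₀
    · exact (hcont_m.continuousOn).sqrt
    · exact fun p hp => ne_of_gt (hsqrt_pos p hp)
  have hHfun : ∀ p ∈ Ioo a b, HasDerivAt (fun y => Hfun ω y s) (Hp ω p s) p := by
    intro p hp
    apply intervalIntegral.integral_hasDerivAt_right
    · exact (contHp.mono (Set.ordConnected_Ioo.uIcc_subset h0W hp)).intervalIntegrable
    · exact ContinuousOn.stronglyMeasurableAtFilter isOpen_Ioo contHp p hp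
    · exact contHp.continuousAt (isOpen_Ioo.mem_nhds hp)
  -- ## w derivatives
  have hwq : ∀ q p, dq (wfun ω s h) q p = dq h q p := by
    intro q p
    show deriv (fun x => h x p - Hfun ω p s) q = deriv (fun x => h x p) q
    exact deriv_sub_const _
  have hwp : ∀ q : ℝ, ∀ p ∈ Ioo a b, dp (wfun ω s h) q p = dp h q p - Hp ω p s := by
    intro q p hp
    show deriv (fun y => h q y - Hfun ω y s) p = dp h q p - Hp ω p s
    exact ((hdpB q p).sub (hHfun p hp)).deriv
  -- ## the explicit integrand, its q-derivative, and the flux primitive G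
  set fe : ℝ → ℝ → ℝ := fun x t =>
    (dp h x t - Hp ω t s) ^ 2 / (dp h x t * (Hp ω t s) ^ 2) - (dq h x t) ^ 2 / dp h x t
    with hfe
  set F' : ℝ → ℝ → ℝ := fun x t =>
    dq (dp h) x t * (1 / (Hp ω t s) ^ 2 - 1 / (dp h x t) ^ 2)
      - 2 * dq h x t * dq (dq h) x t / dp h x t
      + (dq h x t) ^ 2 * dq (dp h) x t / (dp h x t) ^ 2
    with hF'
  set G : ℝ → ℝ → ℝ := fun x y =>
    -(dq h x y) * ((1 + (dq h x y) ^ 2) / (dp h x y) ^ 2 - (s ^ 2 - 2 * Omeg ω y))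
    with hG
  have hfe_eq : ∀ x : ℝ, ∀ t ∈ Ioo a b,
      (dp (wfun ω s h) x t) ^ 2 / (dp h x t * (Hp ω t s) ^ 2)
        - (dq (wfun ω s h) x t) ^ 2 / dp h x t = fe x t := by
    intro x t ht
    rw [hwq, hwp x t ht, hfe]
  -- C1 : q-derivative of the integrand
  have C1 : ∀ t ∈ Icc (0:ℝ) 1, ∀ x : ℝ,
      HasDerivAt (fun x' => (dp (wfun ω s h) x' t) ^ 2 / (dp h x' t * (Hp ω t s) ^ 2)
        - (dq (wfun ω s h) x' t) ^ 2 / dp h x' t) (F' x t) x := by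
    intro t ht x
    have htW := hIccW ht
    have heq : (fun x' => (dp (wfun ω s h) x' t) ^ 2 / (dp h x' t * (Hp ω t s) ^ 2)
        - (dq (wfun ω s h) x' t) ^ 2 / dp h x' t) = fun x' => fe x' t :=
      funext fun x' => hfe_eq x' t htW
    rw [heq, hfe]
    have hb' := hQP x t
    have ha' := hQQ x t
    have hcne : Hp ω t s ≠ 0 := ne_of_gt (hHpPos t htW)
    have hbne : dp h x t ≠ 0 := ne_of_gt (hppos x t ht)
    have h1 := (((hb'.sub_const (Hp ω t s)).pow 2).div (hb'.mul_const ((Hp ω t s) ^ 2))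
      (mul_ne_zero hbne (pow_ne_zero 2 hcne)))
    have h3 := ((ha'.pow 2).div hb' hbne)
    have h4 := h1.sub h3
    convert h4 using 1
    · rfl
    · rfl
    · rfl
    rw [hF']
    simp only [Pi.pow_apply, Pi.neg_apply, Pi.sub_apply, Pi.div_apply, Pi.add_apply]
    field_simp
    ring
  -- C2 : p-derivative of G
  have C2 : ∀ x : ℝ, ∀ t ∈ Icc (0:ℝ) 1, HasDerivAt (fun y => G x y) (F' x t) t := by
    intro x t ht
    have htW := hIccW ht
    have hbne : dp h x t ≠ 0 := ne_of_gt (hppos x t ht)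
    have ha' := hPQ x t
    have hb' := hPP x t
    have hin := ((((ha'.pow 2).const_add 1).div (hb'.pow 2) (pow_ne_zero 2 hbne)).sub
      (((hΩ t).const_mul 2).const_sub (s ^ 2)))
    have hGder := (ha'.neg.mul hin)
    rw [hG]
    convert hGder using 1
    · rfl
    · rfl
    · rfl
    simp only [hF']
    rw [hsymm x t, hHpsq' t htW]
    have hp := hpde x t ht
    have hA1 : dq (dq h) x t =
        -((1 + (dq h x t) ^ 2) / (dp h x t) ^ 2 * dp (dp h) x t
          - 2 * (dq h x t) / (dp h x t) * dp (dq h) x t - ω t * dp h x t) := by linarith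
    rw [hA1]
    simp only [Pi.pow_apply, Pi.neg_apply, Pi.sub_apply, Pi.div_apply, Pi.add_apply]
    field_simp
    ring
  intro q₀ p₀ hp₀
  have huIcc : uIcc (0:ℝ) p₀ ⊆ Icc (0:ℝ) 1 := by
    rw [uIcc_of_le hp₀.1]
    exact Icc_subset_Icc (le_refl 0) hp₀.2
  -- continuity of the explicit integrand on a fixed vertical line
  have hVopen : ∀ x : ℝ, IsOpen (Ioo a b ∩ {t : ℝ | 0 < dp h x t}) := by
    intro x
    refine isOpen_Ioo.inter (isOpen_lt continuous_const ?_)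
    exact contB.comp (continuous_const.prodMk continuous_id)
  have hIccV : ∀ x : ℝ, Icc (0:ℝ) 1 ⊆ Ioo a b ∩ {t : ℝ | 0 < dp h x t} :=
    fun x p hp => ⟨hIccW hp, hppos x p hp⟩
  have contBline : ∀ x : ℝ, Continuous (fun t => dp h x t) :=
    fun x => contB.comp (continuous_const.prodMk continuous_id)
  have contAline : ∀ x : ℝ, Continuous (fun t => dq h x t) :=
    fun x => contA.comp (continuous_const.prodMk continuous_id)
  have contfe : ∀ x : ℝ, ContinuousOn (fun t => fe x t) (Ioo a b ∩ {t : ℝ | 0 < dp h x t}) := by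
    intro x
    rw [hfe]
    apply ContinuousOn.sub
    · apply ContinuousOn.div
      · exact (((contBline x).continuousOn).sub (contHp.mono inter_subset_left)).pow 2
      · exact ((contBline x).continuousOn).mul ((contHp.mono inter_subset_left).pow 2)
      · intro t htV
        exact mul_ne_zero (ne_of_gt htV.2) (pow_ne_zero 2 (ne_of_gt (hHpPos t htV.1)))
    · apply ContinuousOn.div
      · exact ((contAline x).continuousOn).pow 2
      · exact (contBline x).continuousOn
      · exact fun t htV => ne_of_gt htV.2
  have hf2cont : ∀ x : ℝ, ContinuousOn
      (fun t => (dp (wfun ω s h) x t) ^ 2 / (dp h x t * (Hp ω t s) ^ 2)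
        - (dq (wfun ω s h) x t) ^ 2 / dp h x t) (Ioo a b ∩ {t : ℝ | 0 < dp h x t}) := by
    intro x
    exact (contfe x).congr fun t htV => hfe_eq x t htV.1
  have hf2int : ∀ x : ℝ, IntervalIntegrable
      (fun t => (dp (wfun ω s h) x t) ^ 2 / (dp h x t * (Hp ω t s) ^ 2)
        - (dq (wfun ω s h) x t) ^ 2 / dp h x t) volume 0 p₀ :=
    fun x => ((hf2cont x).mono (fun t htc => hIccV x (huIcc htc))).intervalIntegrable
  constructor
  -- ### Part 1 : the p-derivative
  · show deriv (fun y => Phi ω s h q₀ y) p₀ = _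
    refine (intervalIntegral.integral_hasDerivAt_right (hf2int q₀)
      (ContinuousOn.stronglyMeasurableAtFilter (hVopen q₀) (hf2cont q₀) p₀ (hIccV q₀ hp₀))
      ((hf2cont q₀).continuousAt ((hVopen q₀).mem_nhds (hIccV q₀ hp₀)))).deriv
  -- ### Part 2 : the q-derivative
  · -- explicit continuous version of F' on the vertical line
    have cont_qpline : ∀ x : ℝ, Continuous (fun t => dq (dp h) x t) :=
      fun x => cont_qp.comp (continuous_const.prodMk continuous_id)
    have cont_qqline : ∀ x : ℝ, Continuous (fun t => dq (dq h) x t) :=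
      fun x => cont_qq.comp (continuous_const.prodMk continuous_id)
    have contF' : ∀ x : ℝ, ContinuousOn (fun t => F' x t)
        (Ioo a b ∩ {t : ℝ | 0 < dp h x t}) := by
      intro x
      simp only [hF']
      have hHne : ∀ t ∈ Ioo a b ∩ {t : ℝ | 0 < dp h x t}, Hp ω t s ≠ 0 :=
        fun t ht => ne_of_gt (hHpPos t ht.1)
      have hBne : ∀ t ∈ Ioo a b ∩ {t : ℝ | 0 < dp h x t}, dp h x t ≠ 0 :=
        fun t ht => ne_of_gt ht.2
      apply ContinuousOn.add
      · apply ContinuousOn.sub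
        · exact ((cont_qpline x).continuousOn).mul
            ((continuousOn_const.div ((contHp.mono inter_subset_left).pow 2)
              (fun t ht => pow_ne_zero 2 (hHne t ht))).sub
             (continuousOn_const.div (((contBline x).continuousOn).pow 2)
              (fun t ht => pow_ne_zero 2 (hBne t ht))))
        · exact (((continuous_const.mul (contAline x)).continuousOn).mul
            ((cont_qqline x).continuousOn)).div ((contBline x).continuousOn) hBne
      · exact ((((contAline x).continuousOn).pow 2).mul ((cont_qpline x).continuousOn)).div
          (((contBline x).continuousOn).pow 2) (fun t ht => pow_ne_zero 2 (hBne t ht))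
    -- uniform bound for F' near q₀
    obtain ⟨M, hM⟩ : ∃ M : ℝ, ∀ x ∈ Metric.closedBall q₀ 1, ∀ t ∈ Icc (0:ℝ) 1, ‖F' x t‖ ≤ M := by
      have hK : IsCompact (Metric.closedBall q₀ 1 ×ˢ Icc (0:ℝ) 1) :=
        (isCompact_closedBall _ _).prod isCompact_Icc
      have hcont : ContinuousOn (fun z : ℝ × ℝ => F' z.1 z.2)
          (Metric.closedBall q₀ 1 ×ˢ Icc (0:ℝ) 1) := by
        simp only [hF']
        have hHpz : ContinuousOn (fun z : ℝ × ℝ => Hp ω z.2 s)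
            (Metric.closedBall q₀ 1 ×ˢ Icc (0:ℝ) 1) :=
          contHp.comp continuous_snd.continuousOn (fun z hz => hIccW hz.2)
        have hBne : ∀ z ∈ Metric.closedBall q₀ 1 ×ˢ Icc (0:ℝ) 1, dp h z.1 z.2 ≠ 0 :=
          fun z hz => ne_of_gt (hppos z.1 z.2 hz.2)
        have hHne : ∀ z ∈ Metric.closedBall q₀ 1 ×ˢ Icc (0:ℝ) 1, Hp ω z.2 s ≠ 0 :=
          fun z hz => ne_of_gt (hHpPos z.2 (hIccW hz.2))
        apply ContinuousOn.add
        · apply ContinuousOn.sub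
          · exact (cont_qp.continuousOn).mul
              ((continuousOn_const.div (hHpz.pow 2)
                (fun z hz => pow_ne_zero 2 (hHne z hz))).sub
               (continuousOn_const.div (contB.continuousOn.pow 2)
                (fun z hz => pow_ne_zero 2 (hBne z hz))))
          · exact (((continuous_const.mul contA).continuousOn).mul
              (cont_qq.continuousOn)).div contB.continuousOn hBne
        · exact ((contA.continuousOn.pow 2).mul (cont_qp.continuousOn)).div
            (contB.continuousOn.pow 2) (fun z hz => pow_ne_zero 2 (hBne z hz))
      obtain ⟨M, hM⟩ := hK.exists_bound_of_continuousOn hcont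
      exact ⟨M, fun x hx t ht => hM (x, t) ⟨hx, ht⟩⟩
    have key := intervalIntegral.hasDerivAt_integral_of_dominated_loc_of_deriv_le
      (F := fun x => fun t => (dp (wfun ω s h) x t) ^ 2 / (dp h x t * (Hp ω t s) ^ 2)
        - (dq (wfun ω s h) x t) ^ 2 / dp h x t)
      (F' := F') (x₀ := q₀) (a := (0:ℝ)) (b := p₀) (μ := volume) (bound := fun _ => M)
      (Metric.ball_mem_nhds q₀ one_pos)
      (Eventually.of_forall fun x =>
        ((hf2cont x).mono fun t htc => hIccV x (huIcc (uIoc_subset_uIcc htc))).aestronglyMeasurable measurableSet_uIoc)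
      (hf2int q₀)
      (((contF' q₀).mono fun t htc => hIccV q₀ (huIcc (uIoc_subset_uIcc htc))).aestronglyMeasurable measurableSet_uIoc)
      (Eventually.of_forall fun t htc x hx =>
        hM x (Metric.ball_subset_closedBall hx) t (huIcc (uIoc_subset_uIcc htc)))
      (intervalIntegrable_const)
      (Eventually.of_forall fun t htc x _ => C1 t (huIcc (uIoc_subset_uIcc htc)) x)
    have hcalc : (∫ t in (0:ℝ)..p₀, F' q₀ t) = G q₀ p₀ - G q₀ 0 := by
      apply intervalIntegral.integral_eq_sub_of_hasDerivAt
      · exact fun t htc => C2 q₀ t (huIcc htc)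
      · exact key.1
    have hG0 : G q₀ 0 = 0 := by
      have hdq0 : dq h q₀ 0 = 0 := by
        rw [dq]
        have he : (fun x => h x 0) = fun _ => (0:ℝ) := funext fun x => hbot x
        rw [he, deriv_const]
      rw [hG]
      simp only [hdq0]
      ring
    have hDq : deriv (fun x => Phi ω s h x p₀) q₀ = ∫ t in (0:ℝ)..p₀, F' q₀ t := key.2.deriv
    show deriv (fun x => Phi ω s h x p₀) q₀ = _
    rw [hDq, hcalc, hG0, sub_zero, hwq, hHpsq' p₀ (hIccW hp₀)]
end

section
/- Let h solve the height system with Bernoulli constant r, let s > s₀, set w = h − H(·;s) and Φ = Φ^{(s)}. Then for all (q,p) ∈ S the vector-field identity (Φ_p, −Φ_q) · (w_q, w_p) = −( w_p²/(h_p² H_p) + w_q² H_p/h_p² ) w_q holds; in particular, wherever w_q > 0 this scalar product is strictly negative. -/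
open MeasureTheory Set Filter

lemma sliceQ {f : ℝ × ℝ → ℝ} {q p : ℝ} (hf : DifferentiableAt ℝ f (q, p)) :
    HasDerivAt (fun x => f (x, p)) (fderiv ℝ f (q, p) (1, 0)) q := by
  have h1 : HasDerivAt (fun x : ℝ => (x, p)) ((1:ℝ), (0:ℝ)) q :=
    (hasDerivAt_id q).prodMk (hasDerivAt_const q p)
  exact hf.hasFDerivAt.comp_hasDerivAt q h1

lemma sliceP {f : ℝ × ℝ → ℝ} {q p : ℝ} (hf : DifferentiableAt ℝ f (q, p)) :
    HasDerivAt (fun y => f (q, y)) (fderiv ℝ f (q, p) (0, 1)) p := by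
  have h1 : HasDerivAt (fun y : ℝ => (q, y)) ((0:ℝ), (1:ℝ)) p :=
    (hasDerivAt_const p q).prodMk (hasDerivAt_id p)
  exact hf.hasFDerivAt.comp_hasDerivAt p h1

lemma sliceQ2 {F : ℝ × ℝ → (ℝ × ℝ) →L[ℝ] ℝ} {q p : ℝ} (hF : DifferentiableAt ℝ F (q, p))
    (v : ℝ × ℝ) :
    HasDerivAt (fun x => F (x, p) v) (fderiv ℝ F (q, p) (1, 0) v) q := by
  have h1 : HasDerivAt (fun x : ℝ => (x, p)) ((1:ℝ), (0:ℝ)) q :=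
    (hasDerivAt_id q).prodMk (hasDerivAt_const q p)
  have h2 := ((ContinuousLinearMap.apply ℝ ℝ v).hasFDerivAt.comp (q,p)
    hF.hasFDerivAt).comp_hasDerivAt q h1
  simpa [Function.comp_def] using h2

lemma sliceP2 {F : ℝ × ℝ → (ℝ × ℝ) →L[ℝ] ℝ} {q p : ℝ} (hF : DifferentiableAt ℝ F (q, p))
    (v : ℝ × ℝ) :
    HasDerivAt (fun y => F (q, y) v) (fderiv ℝ F (q, p) (0, 1) v) p := by
  have h1 : HasDerivAt (fun y : ℝ => (q, y)) ((0:ℝ), (1:ℝ)) p :=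
    (hasDerivAt_const p q).prodMk (hasDerivAt_id p)
  have h2 := ((ContinuousLinearMap.apply ℝ ℝ v).hasFDerivAt.comp (q,p)
    hF.hasFDerivAt).comp_hasDerivAt p h1
  simpa [Function.comp_def] using h2


private lemma alg1 (A B M N c : ℝ) (hB : B ≠ 0) (hc : c ≠ 0) :
    M * (c ^ 2)⁻¹ - (2 * A * N * B + (1 - A ^ 2) * M) / B ^ 2 =
      (2 * (B - c) ^ 1 * M * (B * c ^ 2) - (B - c) ^ 2 * (M * c ^ 2)) / (B * c ^ 2) ^ 2
        - ((2 * A ^ 1 * N) * B - A ^ 2 * M) / B ^ 2 := by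
  field_simp
  ring

private lemma alg2 (A B M N P G0 wt : ℝ) (hB : B ≠ 0)
    (hpde : (1 + A ^ 2) / B ^ 2 * P - 2 * A / B * M + N - wt * B = 0) :
    M * G0 - (2 * A * N * B + (1 - A ^ 2) * M) / B ^ 2 =
      M * G0 + A * -(2 * wt)
        - ((M * (1 + A ^ 2) + A * (2 * A ^ 1 * M)) * B ^ 2
            - A * (1 + A ^ 2) * (2 * B ^ 1 * P)) / (B ^ 2) ^ 2 := by
  have hN : N = wt * B + 2 * A * M / B - (1 + A ^ 2) * P / B ^ 2 := by
    field_simp at hpde ⊢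
    linarith
  rw [hN]
  field_simp
  ring

private lemma alg3 (A B c Gp : ℝ) (hB : B ≠ 0) (hc : c ≠ 0) (hg : Gp = (c ^ 2)⁻¹) :
    ((B - c) ^ 2 / (B * c ^ 2) - A ^ 2 / B) * A
      - (A * Gp - A * (1 + A ^ 2) / B ^ 2) * (B - c) =
      -((B - c) ^ 2 / (B ^ 2 * c) + A ^ 2 * c / B ^ 2) * A := by
  rw [hg]
  field_simp
  ring

set_option maxHeartbeats 1600000 in
/-- for a solution `h` of the height system, `s > s₀`, `w = h − H(·;s)` and
`Φ = Φ^{(s)}`, the identity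
`(Φ_p, −Φ_q) · (w_q, w_p) = −(w_p²/(h_p² H_p) + w_q² H_p/h_p²) w_q` holds on `S`;
in particular the scalar product is strictly negative wherever `w_q > 0`. -/
theorem stmt15 (ω : ℝ → ℝ) (hω : Continuous ω) (r : ℝ) (h : ℝ → ℝ → ℝ)
    (hsol : HeightSol ω r h)
    (s : ℝ) (hs : s0 ω < s) :
    ∀ q : ℝ, ∀ p ∈ Icc (0:ℝ) 1,
      (dp (Phi ω s h) q p * dq (wfun ω s h) q p
          - dq (Phi ω s h) q p * dp (wfun ω s h) q p =
        -((dp (wfun ω s h) q p) ^ 2 / ((dp h q p) ^ 2 * Hp ω p s)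
            + (dq (wfun ω s h) q p) ^ 2 * Hp ω p s / (dp h q p) ^ 2)
          * dq (wfun ω s h) q p) ∧
      (0 < dq (wfun ω s h) q p →
        dp (Phi ω s h) q p * dq (wfun ω s h) q p
          - dq (Phi ω s h) q p * dp (wfun ω s h) q p < 0) := by
  -- ## Setup: primitive of ω and positivity of g = s² − 2Ω
  have hΩ : ∀ t, HasDerivAt (Omeg ω) (ω t) t := fun t =>
    intervalIntegral.integral_hasDerivAt_right (hω.intervalIntegrable 0 t)
      (hω.stronglyMeasurableAtFilter _ _) hω.continuousAt
  have hΩc : Continuous (Omeg ω) :=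
    Differentiable.continuous fun t => (hΩ t).differentiableAt
  set g : ℝ → ℝ := fun t => s ^ 2 - 2 * Omeg ω t with hgdef
  have hgc : Continuous g := continuous_const.sub (continuous_const.mul hΩc)
  have hgd : ∀ t, HasDerivAt g (-(2 * ω t)) t := by
    intro t
    exact ((hasDerivAt_const t (s ^ 2)).sub ((hΩ t).const_mul 2)).congr_deriv (by ring)
  have hgpos : ∀ t ∈ Icc (0:ℝ) 1, 0 < g t := by
    intro t ht
    have hbdd : BddAbove ((fun p => 2 * Omeg ω p) '' Icc (0:ℝ) 1) :=
      (isCompact_Icc.image (continuous_const.mul hΩc)).bddAbove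
    have h1 : 2 * Omeg ω t ≤ sSup ((fun p => 2 * Omeg ω p) '' Icc (0:ℝ) 1) :=
      le_csSup hbdd (mem_image_of_mem _ ht)
    have h3 : sSup ((fun p => 2 * Omeg ω p) '' Icc (0:ℝ) 1) < s ^ 2 := by
      have hspos : 0 < s := lt_of_le_of_lt (Real.sqrt_nonneg _) hs
      exact (Real.sqrt_lt' hspos).mp hs
    simp only [hgdef]
    linarith
  -- ## Interval neighborhood W of [0,1] on which g > 0
  have hU : IsOpen {t : ℝ | 0 < g t} := isOpen_lt continuous_const hgc
  have h0U : {t : ℝ | 0 < g t} ∈ nhds (0:ℝ) := hU.mem_nhds (by simpa using hgpos 0 (by norm_num))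
  have h1U : {t : ℝ | 0 < g t} ∈ nhds (1:ℝ) := hU.mem_nhds (by simpa using hgpos 1 (by norm_num))
  obtain ⟨δ₀, hδ₀, hball0⟩ := Metric.mem_nhds_iff.mp h0U
  obtain ⟨δ₁, hδ₁, hball1⟩ := Metric.mem_nhds_iff.mp h1U
  set W : Set ℝ := Ioo (-δ₀) (1 + δ₁) with hWdef
  have hWopen : IsOpen W := isOpen_Ioo
  have hW01 : Icc (0:ℝ) 1 ⊆ W := fun t ht => ⟨by linarith [ht.1], by linarith [ht.2]⟩
  have hWg : ∀ t ∈ W, 0 < g t := by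
    intro t ht
    rcases lt_or_ge t 0 with hlt | hge
    · exact hball0 (by rw [Metric.mem_ball, Real.dist_eq, sub_zero, abs_of_neg hlt]; linarith [ht.1])
    · rcases le_or_gt t 1 with h' | h'
      · exact hgpos t ⟨hge, h'⟩
      · exact hball1 (by
          rw [Metric.mem_ball, Real.dist_eq, abs_of_pos (by linarith : (0:ℝ) < t - 1)]
          linarith [ht.2])
  have h0W : (0:ℝ) ∈ W := hW01 (by norm_num)
  have huIccW : ∀ t ∈ W, uIcc 0 t ⊆ W := fun t ht => (Set.ordConnected_Ioo).uIcc_subset h0W ht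
  -- ## Hp and Hfun facts
  have hHpg : ∀ t, Hp ω t s = (Real.sqrt (g t))⁻¹ := fun t => rfl
  have hHppos : ∀ t ∈ W, 0 < Hp ω t s := fun t ht => by
    rw [hHpg]; exact inv_pos.mpr (Real.sqrt_pos.mpr (hWg t ht))
  have hHp2 : ∀ t ∈ W, Hp ω t s ^ 2 = (g t)⁻¹ := by
    intro t ht
    rw [hHpg, inv_pow, Real.sq_sqrt (hWg t ht).le]
  have hHpc : ContinuousOn (fun t => Hp ω t s) W := by
    apply ContinuousOn.inv₀ (hgc.continuousOn.sqrt)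
    exact fun t ht => (Real.sqrt_pos.mpr (hWg t ht)).ne'
  have hHfun : ∀ t ∈ W, HasDerivAt (fun y => Hfun ω y s) (Hp ω t s) t := fun t ht =>
    intervalIntegral.integral_hasDerivAt_right
      ((hHpc.mono (huIccW t ht)).intervalIntegrable)
      (hHpc.stronglyMeasurableAtFilter hWopen t ht)
      (hHpc.continuousAt (hWopen.mem_nhds ht))
  -- ## Derivative machinery for h
  set f : ℝ × ℝ → ℝ := Function.uncurry h with hfdef
  have hfd : Differentiable ℝ f := hsol.smooth.differentiable two_ne_zero
  set f₁ := fderiv ℝ f with hf1def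
  have hf₁ : ContDiff ℝ 1 f₁ := hsol.smooth.fderiv_right (le_refl 2)
  have hf₁d : Differentiable ℝ f₁ := hf₁.differentiable one_ne_zero
  have hf₁c : Continuous f₁ := hf₁.continuous
  set f₂ := fderiv ℝ f₁ with hf2def
  have hf₂c : Continuous f₂ := hf₁.continuous_fderiv one_ne_zero
  have hsymm : ∀ z v w, f₂ z v w = f₂ z w v := fun z v w =>
    second_derivative_symmetric (fun y => (hfd y).hasFDerivAt) (hf₁d z).hasFDerivAt v w
  have hdq : ∀ x y, dq h x y = f₁ (x, y) (1, 0) := fun x y => (sliceQ (hfd _)).deriv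
  have hdp : ∀ x y, dp h x y = f₁ (x, y) (0, 1) := fun x y => (sliceP (hfd _)).deriv
  have hdqdp : ∀ x y, dq (dp h) x y = f₂ (x, y) (1, 0) (0, 1) := by
    intro x y
    have he : (fun x' => dp h x' y) = fun x' => f₁ (x', y) (0, 1) := funext fun x' => hdp x' y
    rw [dq, he]; exact (sliceQ2 (hf₁d _) _).deriv
  have hdqdq : ∀ x y, dq (dq h) x y = f₂ (x, y) (1, 0) (1, 0) := by
    intro x y
    have he : (fun x' => dq h x' y) = fun x' => f₁ (x', y) (1, 0) := funext fun x' => hdq x' y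
    rw [dq, he]; exact (sliceQ2 (hf₁d _) _).deriv
  have hdpdq : ∀ x y, dp (dq h) x y = f₂ (x, y) (0, 1) (1, 0) := by
    intro x y
    have he : (fun y' => dq h x y') = fun y' => f₁ (x, y') (1, 0) := funext fun y' => hdq x y'
    rw [dp, he]; exact (sliceP2 (hf₁d _) _).deriv
  have hdpdp : ∀ x y, dp (dp h) x y = f₂ (x, y) (0, 1) (0, 1) := by
    intro x y
    have he : (fun y' => dp h x y') = fun y' => f₁ (x, y') (0, 1) := funext fun y' => hdp x y'
    rw [dp, he]; exact (sliceP2 (hf₁d _) _).deriv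
  have hA_c : Continuous (fun z : ℝ × ℝ => f₁ z (1, 0)) :=
    (ContinuousLinearMap.apply ℝ ℝ ((1:ℝ), (0:ℝ))).continuous.comp hf₁c
  have hB_c : Continuous (fun z : ℝ × ℝ => f₁ z (0, 1)) :=
    (ContinuousLinearMap.apply ℝ ℝ ((0:ℝ), (1:ℝ))).continuous.comp hf₁c
  have hf₂vw_c : ∀ v w : ℝ × ℝ, Continuous (fun z : ℝ × ℝ => f₂ z v w) := fun v w =>
    (ContinuousLinearMap.apply ℝ ℝ w).continuous.comp
      ((ContinuousLinearMap.apply ℝ ((ℝ × ℝ) →L[ℝ] ℝ) v).continuous.comp hf₂c)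
  have hBpos : ∀ x : ℝ, ∀ t ∈ Icc (0:ℝ) 1, 0 < f₁ (x, t) (0, 1) := by
    intro x t ht
    rw [← hdp]; exact hsol.hp_pos x t ht
  -- ## derivatives of w
  have hdqw : ∀ x y, dq (wfun ω s h) x y = f₁ (x, y) (1, 0) := by
    intro x y
    have he : (fun x' => wfun ω s h x' y) = fun x' => h x' y - Hfun ω y s := rfl
    rw [dq, he, deriv_sub_const]
    exact (sliceQ (hfd _)).deriv
  have hdpwH : ∀ x : ℝ, ∀ t ∈ W, HasDerivAt (fun y => wfun ω s h x y)
      (f₁ (x, t) (0, 1) - Hp ω t s) t := fun x t ht =>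
    (sliceP (hfd _)).sub (hHfun t ht)
  have hdpw : ∀ x : ℝ, ∀ t ∈ W, dp (wfun ω s h) x t = f₁ (x, t) (0, 1) - Hp ω t s :=
    fun x t ht => (hdpwH x t ht).deriv
  -- ## the integrand F of Φ and its q-derivative F'
  set F : ℝ → ℝ → ℝ := fun x t =>
    (dp (wfun ω s h) x t) ^ 2 / (dp h x t * (Hp ω t s) ^ 2)
      - (dq (wfun ω s h) x t) ^ 2 / dp h x t with hFdef
  have hPhiF : ∀ x y : ℝ, Phi ω s h x y = ∫ t in (0:ℝ)..y, F x t := fun x y => rfl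
  set F' : ℝ → ℝ → ℝ := fun x t =>
    f₂ (x, t) (1, 0) (0, 1) * g t
      - (2 * f₁ (x, t) (1, 0) * f₂ (x, t) (1, 0) (1, 0) * f₁ (x, t) (0, 1)
          + (1 - f₁ (x, t) (1, 0) ^ 2) * f₂ (x, t) (1, 0) (0, 1)) / f₁ (x, t) (0, 1) ^ 2
    with hF'def
  -- F agrees on W ∩ {B > 0} with an explicit continuous expression
  have hFeq : ∀ x : ℝ, ∀ t ∈ W,
      F x t = (f₁ (x, t) (0, 1) - Hp ω t s) ^ 2 / (f₁ (x, t) (0, 1) * (Hp ω t s) ^ 2)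
        - (f₁ (x, t) (1, 0)) ^ 2 / f₁ (x, t) (0, 1) := by
    intro x t ht
    rw [hFdef]
    simp only [hdpw x t ht, hdqw, hdp]
  have hFcont : ∀ x : ℝ, ContinuousOn (F x) (W ∩ {t | 0 < f₁ (x, t) (0, 1)}) := by
    intro x
    have hBx : Continuous fun t : ℝ => f₁ (x, t) (0, 1) :=
      hB_c.comp (Continuous.prodMk_right x)
    have hAx : Continuous fun t : ℝ => f₁ (x, t) (1, 0) :=
      hA_c.comp (Continuous.prodMk_right x)
    have hE : ContinuousOn (fun t =>
        (f₁ (x, t) (0, 1) - Hp ω t s) ^ 2 / (f₁ (x, t) (0, 1) * (Hp ω t s) ^ 2)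
          - (f₁ (x, t) (1, 0)) ^ 2 / f₁ (x, t) (0, 1))
        (W ∩ {t | 0 < f₁ (x, t) (0, 1)}) := by
      apply ContinuousOn.sub
      · apply ContinuousOn.div
        · exact ((hBx.continuousOn.sub (hHpc.mono inter_subset_left)).pow 2)
        · exact hBx.continuousOn.mul ((hHpc.mono inter_subset_left).pow 2)
        · intro t ht
          exact (mul_pos ht.2 (pow_pos (hHppos t ht.1) 2)).ne'
      · apply ContinuousOn.div (hAx.continuousOn.pow 2) hBx.continuousOn
        intro t ht
        exact ht.2.ne'
    exact hE.congr fun t ht => hFeq x t ht.1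
  have hWB : ∀ x : ℝ, IsOpen (W ∩ {t | 0 < f₁ (x, t) (0, 1)}) := by
    intro x
    exact hWopen.inter (isOpen_lt continuous_const (hB_c.comp (Continuous.prodMk_right x)))
  have hWBsub : ∀ x : ℝ, Icc (0:ℝ) 1 ⊆ W ∩ {t | 0 < f₁ (x, t) (0, 1)} := fun x t ht =>
    ⟨hW01 ht, hBpos x t ht⟩
  -- ## main computation at a point
  intro q p hp
  have hpW : p ∈ W := hW01 hp
  have hpWB : p ∈ W ∩ {t | 0 < f₁ (q, t) (0, 1)} := hWBsub q hp
  have huIcc01 : uIcc (0:ℝ) p ⊆ Icc (0:ℝ) 1 := by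
    rw [uIcc_of_le hp.1]
    exact Icc_subset_Icc le_rfl hp.2
  -- dp Φ = F q p
  have hdpPhi : dp (Phi ω s h) q p = F q p := by
    have hFTC : HasDerivAt (fun y => ∫ t in (0:ℝ)..y, F q t) (F q p) p :=
      intervalIntegral.integral_hasDerivAt_right
        (((hFcont q).mono (huIcc01.trans (hWBsub q))).intervalIntegrable)
        ((hFcont q).stronglyMeasurableAtFilter (hWB q) p hpWB)
        ((hFcont q).continuousAt ((hWB q).mem_nhds hpWB))
    have he : (fun y => Phi ω s h q y) = fun y => ∫ t in (0:ℝ)..y, F q t :=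
      funext fun y => hPhiF q y
    rw [dp, he]
    exact hFTC.deriv
  -- HasDerivAt in q of F · t, for t ∈ [0,1]
  have hFq : ∀ x : ℝ, ∀ t ∈ Icc (0:ℝ) 1, HasDerivAt (fun x' => F x' t) (F' x t) x := by
    intro x t ht
    have htW : t ∈ W := hW01 ht
    have he : (fun x' => F x' t) = fun x' =>
        (f₁ (x', t) (0, 1) - Hp ω t s) ^ 2 / (f₁ (x', t) (0, 1) * (Hp ω t s) ^ 2)
          - (f₁ (x', t) (1, 0)) ^ 2 / f₁ (x', t) (0, 1) :=
      funext fun x' => hFeq x' t htW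
    rw [he]
    have hA : HasDerivAt (fun x' => f₁ (x', t) (1, 0)) (f₂ (x, t) (1, 0) (1, 0)) x :=
      sliceQ2 (hf₁d _) _
    have hB : HasDerivAt (fun x' => f₁ (x', t) (0, 1)) (f₂ (x, t) (1, 0) (0, 1)) x :=
      sliceQ2 (hf₁d _) _
    have hBne : f₁ (x, t) (0, 1) ≠ 0 := (hBpos x t ht).ne'
    have hcpos : 0 < Hp ω t s := hHppos t htW
    have hD : HasDerivAt (fun x' =>
        (f₁ (x', t) (0, 1) - Hp ω t s) ^ 2 / (f₁ (x', t) (0, 1) * (Hp ω t s) ^ 2)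
          - (f₁ (x', t) (1, 0)) ^ 2 / f₁ (x', t) (0, 1))
        ((2 * (f₁ (x, t) (0, 1) - Hp ω t s) ^ 1 * f₂ (x, t) (1, 0) (0, 1)
            * (f₁ (x, t) (0, 1) * (Hp ω t s) ^ 2)
          - (f₁ (x, t) (0, 1) - Hp ω t s) ^ 2 * (f₂ (x, t) (1, 0) (0, 1) * (Hp ω t s) ^ 2))
            / (f₁ (x, t) (0, 1) * (Hp ω t s) ^ 2) ^ 2
        - ((2 * (f₁ (x, t) (1, 0)) ^ 1 * f₂ (x, t) (1, 0) (1, 0)) * f₁ (x, t) (0, 1)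
            - (f₁ (x, t) (1, 0)) ^ 2 * f₂ (x, t) (1, 0) (0, 1)) / (f₁ (x, t) (0, 1)) ^ 2) x := by
      exact (((hB.sub_const (Hp ω t s)).pow 2).div (hB.mul_const ((Hp ω t s) ^ 2))
          (mul_ne_zero hBne (pow_ne_zero 2 hcpos.ne'))).sub
        (((hA.pow 2)).div hB hBne)
    convert hD using 1
    have hgc2 : g t = ((Hp ω t s) ^ 2)⁻¹ := by rw [hHp2 t htW, inv_inv]
    simp only [hF'def]
    rw [hgc2]
    exact alg1 _ _ _ _ _ hBne hcpos.ne'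
  -- dq Φ = ∫ F'
  have hdqPhi : dq (Phi ω s h) q p = ∫ t in (0:ℝ)..p, F' q t := by
    -- bound on the compact set
    obtain ⟨C, hC⟩ : ∃ C, ∀ z ∈ (Metric.closedBall q 1) ×ˢ Icc (0:ℝ) 1, ‖(fun z : ℝ × ℝ =>
        f₂ z (1, 0) (0, 1) * g z.2
          - (2 * f₁ z (1, 0) * f₂ z (1, 0) (1, 0) * f₁ z (0, 1)
              + (1 - f₁ z (1, 0) ^ 2) * f₂ z (1, 0) (0, 1)) / f₁ z (0, 1) ^ 2) z‖ ≤ C := by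
      apply ((isCompact_closedBall q 1).prod isCompact_Icc).exists_bound_of_continuousOn
      apply ContinuousOn.sub
      · exact ((hf₂vw_c (1,0) (0,1)).continuousOn.mul
          (hgc.comp continuous_snd).continuousOn)
      · apply ContinuousOn.div
        · exact (((continuous_const.mul hA_c).mul (hf₂vw_c (1,0) (1,0))).mul hB_c).continuousOn.add
            ((continuous_const.sub (hA_c.pow 2)).mul (hf₂vw_c (1,0) (0,1))).continuousOn
        · exact (hB_c.pow 2).continuousOn
        · intro z hz
          exact (pow_pos (hBpos z.1 z.2 hz.2) 2).ne'
    have hsub : Set.uIoc (0:ℝ) p ⊆ Icc (0:ℝ) 1 := by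
      rw [uIoc_of_le hp.1]
      exact (Ioc_subset_Icc_self).trans (Icc_subset_Icc le_rfl hp.2)
    have hmain := intervalIntegral.hasDerivAt_integral_of_dominated_loc_of_deriv_le
      (F := F) (F' := F') (x₀ := q) (a := 0) (b := p) (bound := fun _ => C) (μ := volume)
      (Metric.ball_mem_nhds q one_pos)
      (Eventually.of_forall fun x =>
        (((hFcont x).mono (hsub.trans (hWBsub x))).aestronglyMeasurable measurableSet_uIoc))
      (((hFcont q).mono (huIcc01.trans (hWBsub q))).intervalIntegrable)
      (by
        have : ContinuousOn (F' q) (Icc (0:ℝ) 1) := by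
          apply ContinuousOn.sub
          · exact (((hf₂vw_c (1,0) (0,1)).comp (Continuous.prodMk_right q)).continuousOn.mul
              hgc.continuousOn)
          · apply ContinuousOn.div
            · exact Continuous.continuousOn (by
                exact ((continuous_const.mul (hA_c.comp (Continuous.prodMk_right q))).mul
                    ((hf₂vw_c (1,0) (1,0)).comp (Continuous.prodMk_right q))).mul
                    (hB_c.comp (Continuous.prodMk_right q)) |>.add
                  ((continuous_const.sub ((hA_c.comp (Continuous.prodMk_right q)).pow 2)).mul
                    ((hf₂vw_c (1,0) (0,1)).comp (Continuous.prodMk_right q))))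
            · exact ((hB_c.comp (Continuous.prodMk_right q)).pow 2).continuousOn
            · intro t ht
              exact (pow_pos (hBpos q t ht) 2).ne'
        exact (this.mono hsub).aestronglyMeasurable measurableSet_uIoc)
      (Eventually.of_forall fun t ht x hx => by
        have := hC (x, t) ⟨Metric.ball_subset_closedBall hx, hsub ht⟩
        simpa using this)
      (intervalIntegrable_const)
      (Eventually.of_forall fun t ht x _ => hFq x t (hsub ht))
    have he : (fun x => Phi ω s h x p) = fun x => ∫ t in (0:ℝ)..p, F x t :=
      funext fun x => hPhiF x p
    rw [dq, he]
    exact hmain.2.deriv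
  -- the antiderivative G of F' q along p
  set G : ℝ → ℝ := fun t =>
    f₁ (q, t) (1, 0) * g t - f₁ (q, t) (1, 0) * (1 + f₁ (q, t) (1, 0) ^ 2) / f₁ (q, t) (0, 1) ^ 2
    with hGdef
  have hGderiv : ∀ t ∈ uIcc (0:ℝ) p, HasDerivAt G (F' q t) t := by
    intro t ht
    have ht01 : t ∈ Icc (0:ℝ) 1 := huIcc01 ht
    have hA' : HasDerivAt (fun y => f₁ (q, y) (1, 0)) (f₂ (q, t) (0, 1) (1, 0)) t :=
      sliceP2 (hf₁d _) _
    have hB' : HasDerivAt (fun y => f₁ (q, y) (0, 1)) (f₂ (q, t) (0, 1) (0, 1)) t :=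
      sliceP2 (hf₁d _) _
    have hBne : f₁ (q, t) (0, 1) ≠ 0 := (hBpos q t ht01).ne'
    have hD : HasDerivAt G
        (f₂ (q, t) (0, 1) (1, 0) * g t + f₁ (q, t) (1, 0) * -(2 * ω t)
          - ((f₂ (q, t) (0, 1) (1, 0) * (1 + f₁ (q, t) (1, 0) ^ 2)
              + f₁ (q, t) (1, 0) * (2 * (f₁ (q, t) (1, 0)) ^ 1 * f₂ (q, t) (0, 1) (1, 0)))
                * f₁ (q, t) (0, 1) ^ 2
            - f₁ (q, t) (1, 0) * (1 + f₁ (q, t) (1, 0) ^ 2)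
                * (2 * (f₁ (q, t) (0, 1)) ^ 1 * f₂ (q, t) (0, 1) (0, 1)))
              / (f₁ (q, t) (0, 1) ^ 2) ^ 2) t := by
      exact (hA'.mul (hgd t)).sub
        (((hA'.mul ((hA'.pow 2).const_add 1)).div (hB'.pow 2) (pow_ne_zero 2 hBne)))
    convert hD using 1
    -- use the PDE and symmetry of second derivatives
    have hsym : f₂ (q, t) (0, 1) (1, 0) = f₂ (q, t) (1, 0) (0, 1) := hsymm _ _ _
    have hpde := hsol.pde q t ht01
    rw [hdq, hdp, hdqdq, hdpdq, hdpdp, hsym] at hpde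
    simp only [hF'def]
    rw [hsym]
    exact alg2 _ _ _ _ _ _ _ hBne hpde
  have hG0 : G 0 = 0 := by
    have hA0 : f₁ (q, 0) (1, 0) = 0 := by
      rw [← hdq, dq]
      have : (fun x => h x 0) = fun _ => (0:ℝ) := funext fun x => hsol.bot x
      rw [this, deriv_const]
    rw [hGdef]
    simp [hA0]
  have hintF' : ∫ t in (0:ℝ)..p, F' q t = G p := by
    have hint : IntervalIntegrable (F' q) volume 0 p := by
      apply ContinuousOn.intervalIntegrable
      apply ContinuousOn.sub
      · exact (((hf₂vw_c (1,0) (0,1)).comp (Continuous.prodMk_right q)).continuousOn.mul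
          hgc.continuousOn)
      · apply ContinuousOn.div
        · exact Continuous.continuousOn (by
            exact ((continuous_const.mul (hA_c.comp (Continuous.prodMk_right q))).mul
                ((hf₂vw_c (1,0) (1,0)).comp (Continuous.prodMk_right q))).mul
                (hB_c.comp (Continuous.prodMk_right q)) |>.add
              ((continuous_const.sub ((hA_c.comp (Continuous.prodMk_right q)).pow 2)).mul
                ((hf₂vw_c (1,0) (0,1)).comp (Continuous.prodMk_right q))))
        · exact ((hB_c.comp (Continuous.prodMk_right q)).pow 2).continuousOn
        · intro t ht
          exact (pow_pos (hBpos q t (huIcc01 ht)) 2).ne'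
    rw [intervalIntegral.integral_eq_sub_of_hasDerivAt hGderiv hint, hG0, sub_zero]
  -- ## final algebra
  have hcpos : 0 < Hp ω p s := hHppos p hpW
  have hc2 : (Hp ω p s) ^ 2 = (g p)⁻¹ := hHp2 p hpW
  have hBp : 0 < f₁ (q, p) (0, 1) := hBpos q p hp
  have hgp : 0 < g p := hWg p hpW
  have key : dp (Phi ω s h) q p * dq (wfun ω s h) q p
      - dq (Phi ω s h) q p * dp (wfun ω s h) q p =
      -((dp (wfun ω s h) q p) ^ 2 / ((dp h q p) ^ 2 * Hp ω p s)
          + (dq (wfun ω s h) q p) ^ 2 * Hp ω p s / (dp h q p) ^ 2)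
        * dq (wfun ω s h) q p := by
    rw [hdpPhi, hdqPhi, hintF', hFeq q p hpW]
    simp only [hGdef]
    rw [hdqw, hdpw q p hpW, hdp]
    exact alg3 _ _ _ _ hBp.ne' hcpos.ne' (by rw [hc2, inv_inv])
  refine ⟨key, fun hwq => ?_⟩
  rw [key]
  have h1 : 0 < (dq (wfun ω s h) q p) ^ 2 * Hp ω p s / (dp h q p) ^ 2 := by
    apply div_pos (mul_pos (pow_pos hwq 2) hcpos)
    rw [hdp]
    exact pow_pos hBp 2
  have h2 : 0 ≤ (dp (wfun ω s h) q p) ^ 2 / ((dp h q p) ^ 2 * Hp ω p s) := by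
    apply div_nonneg (sq_nonneg _)
    rw [hdp]
    exact (mul_pos (pow_pos hBp 2) hcpos).le
  nlinarith
end
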